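/- arXiv:2410.21032 — 3 statements merged into one kernel-verified Lean document; each statement's English description precedes it below -/
import Mathlib

section
/- Tail asymptotics of the class AII† edge limit: let D(y) := (1/2) · e^{−y²/2} · ∫_{y/√2}^∞ e^{v²} · erfc(√2·v) dv for y ∈ ℝ. Then lim_{y→+∞} √(8π) · y² · e^{y²} · D(y) = 1, and lim_{y→−∞} (−√2·y) · D(y) = 1. -/
open Filter MeasureTheory

/-- The complementary error function `erfc(t) = (2/√π) ∫_t^∞ e^{−s²} ds`. -/
noncomputable def erfc (t : ℝ) : ℝ :=
  (2 / Real.sqrt Real.pi) * ∫ s in Set.Ioi t, Real.exp (-s ^ 2)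

/-- The class AII† edge limit `D(y) = (1/2) e^{−y²/2} ∫_{y/√2}^∞ e^{v²} erfc(√2 v) dv`. -/
noncomputable def edgeAII (y : ℝ) : ℝ :=
  (1 / 2) * Real.exp (-y ^ 2 / 2) *
    ∫ v in Set.Ioi (y / Real.sqrt 2), Real.exp (v ^ 2) * erfc (Real.sqrt 2 * v)

open Set

lemma erfc_def (t : ℝ) :
    erfc t = (2 / Real.sqrt Real.pi) * ∫ s in Set.Ioi t, Real.exp (-s ^ 2) := rfl

lemma integrable_gauss : Integrable (fun s : ℝ => Real.exp (-s ^ 2)) := by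
  have := integrable_exp_neg_mul_sq (b := 1) one_pos
  simpa using this

lemma gauss_total : ∫ s : ℝ, Real.exp (-s ^ 2) = Real.sqrt Real.pi := by
  have := integral_gaussian 1
  simpa using this

lemma tendsto_gauss_atTop : Tendsto (fun s : ℝ => Real.exp (-s ^ 2)) atTop (nhds 0) := by
  apply Real.tendsto_exp_atBot.comp
  have h : Tendsto (fun s : ℝ => s ^ 2) atTop atTop := tendsto_pow_atTop two_ne_zero
  exact tendsto_neg_atBot_iff.mpr h

lemma erfc_nonneg (t : ℝ) : 0 ≤ erfc t := by
  apply mul_nonneg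
  · positivity
  · exact setIntegral_nonneg measurableSet_Ioi fun s _ => (Real.exp_pos _).le

lemma erfc_add_neg (t : ℝ) : erfc t + erfc (-t) = 2 := by
  have h1 : ∫ s in Set.Ioi (-t), Real.exp (-s ^ 2) = ∫ s in Set.Iic t, Real.exp (-s ^ 2) := by
    have := integral_comp_neg_Ioi (-t) (fun s => Real.exp (-s ^ 2))
    simpa using this
  have h2 : (∫ s in Set.Iic t, Real.exp (-s ^ 2)) + ∫ s in Set.Ioi t, Real.exp (-s ^ 2)
      = Real.sqrt Real.pi := by
    rw [intervalIntegral.integral_Iic_add_Ioi integrable_gauss.integrableOn integrable_gauss.integrableOn]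
    exact gauss_total
  have hpi : Real.sqrt Real.pi ≠ 0 := by positivity
  unfold erfc
  rw [h1, ← mul_add]
  rw [show (∫ s in Set.Ioi t, Real.exp (-s ^ 2)) + ∫ s in Set.Iic t, Real.exp (-s ^ 2)
      = Real.sqrt Real.pi by linarith [h2]]
  field_simp

lemma continuous_erfc : Continuous erfc := by
  have hint : ∀ a b : ℝ, IntervalIntegrable (fun s => Real.exp (-s ^ 2)) volume a b :=
    fun a b => integrable_gauss.intervalIntegrable
  have h : ∀ t : ℝ, ∫ s in Set.Ioi t, Real.exp (-s ^ 2)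
      = Real.sqrt Real.pi - ((∫ s in Set.Iic (0:ℝ), Real.exp (-s ^ 2)) + ∫ s in (0:ℝ)..t, Real.exp (-s ^ 2)) := by
    intro t
    have h2 := intervalIntegral.integral_Iic_add_Ioi (b := t) (f := fun s : ℝ => Real.exp (-s ^ 2))
      integrable_gauss.integrableOn integrable_gauss.integrableOn
    rw [gauss_total] at h2
    have h3 := intervalIntegral.integral_Iic_sub_Iic (a := (0:ℝ)) (b := t) (f := fun s : ℝ => Real.exp (-s ^ 2))
      integrable_gauss.integrableOn integrable_gauss.integrableOn
    linarith
  unfold erfc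
  apply Continuous.mul continuous_const
  have : Continuous fun t : ℝ => Real.sqrt Real.pi - ((∫ s in Set.Iic (0:ℝ), Real.exp (-s ^ 2)) + ∫ s in (0:ℝ)..t, Real.exp (-s ^ 2)) := by
    apply Continuous.sub continuous_const
    exact Continuous.add continuous_const (intervalIntegral.continuous_primitive hint 0)
  exact this.congr fun t => (h t).symm

lemma erfc_le_two (t : ℝ) : erfc t ≤ 2 := by
  have := erfc_add_neg t
  linarith [erfc_nonneg (-t)]

lemma sqrtpi_pos : 0 < Real.sqrt Real.pi := Real.sqrt_pos.mpr Real.pi_pos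

lemma hasDerivAt_gauss (s : ℝ) :
    HasDerivAt (fun s : ℝ => Real.exp (-s ^ 2)) (-(2 * s) * Real.exp (-s ^ 2)) s := by
  have h1 : HasDerivAt (fun s : ℝ => -s ^ 2) (-(2 * s)) s := by
    simpa [Pi.neg_def] using (hasDerivAt_pow 2 s).neg
  have h2 := (Real.hasDerivAt_exp (-s ^ 2)).comp s h1
  refine h2.congr_deriv ?_
  ring

lemma int_aux1 {t : ℝ} (ht : 0 < t) :
    IntegrableOn (fun s => s / t * Real.exp (-s ^ 2)) (Set.Ioi t) ∧
      ∫ s in Set.Ioi t, s / t * Real.exp (-s ^ 2) = Real.exp (-t ^ 2) / (2 * t) := by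
  have hderiv : ∀ s ∈ Set.Ici t, HasDerivAt (fun s : ℝ => -Real.exp (-s ^ 2) / (2 * t))
      (s / t * Real.exp (-s ^ 2)) s := by
    intro s _
    have h := ((hasDerivAt_gauss s).neg).div_const (2 * t)
    refine h.congr_deriv ?_
    field_simp
  have hpos : ∀ s ∈ Set.Ioi t, 0 ≤ s / t * Real.exp (-s ^ 2) := by
    intro s hs
    have : (0:ℝ) < s := lt_trans ht hs
    positivity
  have htend : Tendsto (fun s : ℝ => -Real.exp (-s ^ 2) / (2 * t)) atTop (nhds 0) := by
    have := (tendsto_gauss_atTop.neg).div_const (2 * t)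
    simpa using this
  refine ⟨integrableOn_Ioi_deriv_of_nonneg' hderiv hpos htend, ?_⟩
  rw [integral_Ioi_of_hasDerivAt_of_nonneg' hderiv hpos htend]
  ring

lemma int_aux2 {t : ℝ} (ht : 0 < t) :
    IntegrableOn (fun s => Real.exp (-s ^ 2) * (1 + 1 / (2 * s ^ 2))) (Set.Ioi t) ∧
      ∫ s in Set.Ioi t, Real.exp (-s ^ 2) * (1 + 1 / (2 * s ^ 2))
        = Real.exp (-t ^ 2) / (2 * t) := by
  have hderiv : ∀ s ∈ Set.Ici t, HasDerivAt (fun s : ℝ => -Real.exp (-s ^ 2) / (2 * s))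
      (Real.exp (-s ^ 2) * (1 + 1 / (2 * s ^ 2))) s := by
    intro s hs
    have hs0 : (0:ℝ) < s := lt_of_lt_of_le ht hs
    have h := ((hasDerivAt_gauss s).neg).div ((hasDerivAt_id s).const_mul 2) (by positivity)
    refine h.congr_deriv ?_
    simp only [Pi.neg_apply, id]
    field_simp
    ring
  have hpos : ∀ s ∈ Set.Ioi t, 0 ≤ Real.exp (-s ^ 2) * (1 + 1 / (2 * s ^ 2)) := by
    intro s hs
    have : (0:ℝ) < s := lt_trans ht hs
    positivity
  have htend : Tendsto (fun s : ℝ => -Real.exp (-s ^ 2) / (2 * s)) atTop (nhds 0) := by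
    have h1 : Tendsto (fun s : ℝ => (2 * s)⁻¹) atTop (nhds 0) :=
      (tendsto_inv_atTop_zero).comp (tendsto_id.const_mul_atTop two_pos)
    have := (tendsto_gauss_atTop.neg).mul h1
    simpa [div_eq_mul_inv] using this
  refine ⟨integrableOn_Ioi_deriv_of_nonneg' hderiv hpos htend, ?_⟩
  rw [integral_Ioi_of_hasDerivAt_of_nonneg' hderiv hpos htend]
  ring

lemma int_aux3 {u : ℝ} (hu : 0 < u) :
    IntegrableOn (fun v => Real.exp (-v ^ 2) * (1 / v + 1 / v ^ 3)) (Set.Ioi u) ∧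
      ∫ v in Set.Ioi u, Real.exp (-v ^ 2) * (1 / v + 1 / v ^ 3)
        = Real.exp (-u ^ 2) / (2 * u ^ 2) := by
  have hderiv : ∀ v ∈ Set.Ici u, HasDerivAt (fun v : ℝ => -Real.exp (-v ^ 2) / (2 * v ^ 2))
      (Real.exp (-v ^ 2) * (1 / v + 1 / v ^ 3)) v := by
    intro v hv
    have hv0 : (0:ℝ) < v := lt_of_lt_of_le hu hv
    have h := ((hasDerivAt_gauss v).neg).div ((hasDerivAt_pow 2 v).const_mul 2) (by positivity)
    refine h.congr_deriv ?_
    simp only [Pi.neg_apply, id]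
    field_simp
    ring
  have hpos : ∀ v ∈ Set.Ioi u, 0 ≤ Real.exp (-v ^ 2) * (1 / v + 1 / v ^ 3) := by
    intro v hv
    have : (0:ℝ) < v := lt_trans hu hv
    positivity
  have htend : Tendsto (fun v : ℝ => -Real.exp (-v ^ 2) / (2 * v ^ 2)) atTop (nhds 0) := by
    have h1 : Tendsto (fun v : ℝ => (2 * v ^ 2)⁻¹) atTop (nhds 0) :=
      (tendsto_inv_atTop_zero).comp ((tendsto_pow_atTop two_ne_zero).const_mul_atTop two_pos)
    have := (tendsto_gauss_atTop.neg).mul h1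
    simpa [div_eq_mul_inv] using this
  refine ⟨integrableOn_Ioi_deriv_of_nonneg' hderiv hpos htend, ?_⟩
  rw [integral_Ioi_of_hasDerivAt_of_nonneg' hderiv hpos htend]
  ring

lemma erfc_le {t : ℝ} (ht : 0 < t) : erfc t ≤ Real.exp (-t ^ 2) / (Real.sqrt Real.pi * t) := by
  obtain ⟨hint, hval⟩ := int_aux1 ht
  have hmono : (∫ s in Set.Ioi t, Real.exp (-s ^ 2))
      ≤ ∫ s in Set.Ioi t, s / t * Real.exp (-s ^ 2) := by
    apply setIntegral_mono_on integrable_gauss.integrableOn hint measurableSet_Ioi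
    intro s hs
    have h1 : 1 ≤ s / t := (one_le_div ht).mpr (le_of_lt hs)
    nlinarith [Real.exp_pos (-s ^ 2)]
  rw [erfc_def]
  calc (2 / Real.sqrt Real.pi) * ∫ s in Set.Ioi t, Real.exp (-s ^ 2)
      ≤ (2 / Real.sqrt Real.pi) * (Real.exp (-t ^ 2) / (2 * t)) := by
        apply mul_le_mul_of_nonneg_left _ (by positivity)
        rw [← hval]; exact hmono
    _ = Real.exp (-t ^ 2) / (Real.sqrt Real.pi * t) := by
        have := sqrtpi_pos
        field_simp

lemma erfc_ge {t : ℝ} (ht : 0 < t) :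
    2 / Real.sqrt Real.pi * (t * Real.exp (-t ^ 2) / (2 * t ^ 2 + 1)) ≤ erfc t := by
  obtain ⟨hint, hval⟩ := int_aux2 ht
  set c : ℝ := 2 * t ^ 2 / (2 * t ^ 2 + 1) with hc
  have hc0 : 0 ≤ c := by positivity
  have hmono : (∫ s in Set.Ioi t, c * (Real.exp (-s ^ 2) * (1 + 1 / (2 * s ^ 2))))
      ≤ ∫ s in Set.Ioi t, Real.exp (-s ^ 2) := by
    apply setIntegral_mono_on (hint.const_mul c) integrable_gauss.integrableOn measurableSet_Ioi
    intro s hs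
    have hts : t < s := hs
    have hs0 : (0:ℝ) < s := lt_trans ht hts
    rw [hc]
    rw [div_mul_eq_mul_div, div_le_iff₀ (by positivity)]
    have he : (0:ℝ) < Real.exp (-s ^ 2) := Real.exp_pos _
    have h2 : t ^ 2 ≤ s ^ 2 := by nlinarith
    have hexp : Real.exp (-s ^ 2) * (2 * t ^ 2 * (1 + 1 / (2 * s ^ 2)))
        ≤ Real.exp (-s ^ 2) * (2 * t ^ 2 + 1) := by
      apply mul_le_mul_of_nonneg_left _ he.le
      rw [mul_add, mul_one]
      have : 2 * t ^ 2 * (1 / (2 * s ^ 2)) = t ^ 2 / s ^ 2 := by field_simp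
      rw [this]
      have : t ^ 2 / s ^ 2 ≤ 1 := by
        rw [div_le_one (by positivity)]; exact h2
      linarith
    calc 2 * t ^ 2 * (Real.exp (-s ^ 2) * (1 + 1 / (2 * s ^ 2)))
        = Real.exp (-s ^ 2) * (2 * t ^ 2 * (1 + 1 / (2 * s ^ 2))) := by ring
      _ ≤ Real.exp (-s ^ 2) * (2 * t ^ 2 + 1) := hexp
  rw [MeasureTheory.integral_const_mul, hval] at hmono
  rw [erfc_def]
  calc 2 / Real.sqrt Real.pi * (t * Real.exp (-t ^ 2) / (2 * t ^ 2 + 1))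
      = (2 / Real.sqrt Real.pi) * (c * (Real.exp (-t ^ 2) / (2 * t))) := by
        rw [hc]; field_simp
    _ ≤ (2 / Real.sqrt Real.pi) * ∫ s in Set.Ioi t, Real.exp (-s ^ 2) := by
        apply mul_le_mul_of_nonneg_left hmono (by positivity)

lemma s2_pos : (0:ℝ) < Real.sqrt 2 := Real.sqrt_pos.mpr two_pos
lemma one_le_sqrtpi : (1:ℝ) ≤ Real.sqrt Real.pi := by
  rw [show (1:ℝ) = Real.sqrt 1 by simp]
  exact Real.sqrt_le_sqrt (by linarith [Real.pi_gt_three])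
lemma one_le_s2 : (1:ℝ) ≤ Real.sqrt 2 := by
  rw [show (1:ℝ) = Real.sqrt 1 by simp]
  exact Real.sqrt_le_sqrt (by norm_num)
lemma sq_s2 : Real.sqrt 2 ^ 2 = 2 := Real.sq_sqrt (by norm_num)
lemma sqrt8pi : Real.sqrt (8 * Real.pi) = 2 * Real.sqrt 2 * Real.sqrt Real.pi := by
  rw [Real.sqrt_mul (by norm_num : (0:ℝ) ≤ 8),
    show (8:ℝ) = 2 ^ 2 * 2 by norm_num,
    Real.sqrt_mul (by positivity), Real.sqrt_sq (by norm_num : (0:ℝ) ≤ 2)]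

noncomputable def gfun (v : ℝ) : ℝ := Real.exp (v ^ 2) * erfc (Real.sqrt 2 * v)
noncomputable def Ffun (u : ℝ) : ℝ := ∫ v in Set.Ioi u, gfun v

lemma continuous_gfun : Continuous gfun :=
  (Real.continuous_exp.comp (continuous_pow 2)).mul
    (continuous_erfc.comp (continuous_const.mul continuous_id))

lemma gfun_nonneg (v : ℝ) : 0 ≤ gfun v :=
  mul_nonneg (Real.exp_pos _).le (erfc_nonneg _)

lemma exp_sq_mul_gauss (v : ℝ) : Real.exp (v ^ 2) * Real.exp (-(2 * v ^ 2)) = Real.exp (-v ^ 2) := by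
  rw [← Real.exp_add]; congr 1; ring

lemma gfun_le {v : ℝ} (hv : 0 < v) :
    gfun v ≤ Real.exp (-v ^ 2) / (Real.sqrt Real.pi * Real.sqrt 2 * v) := by
  have h := erfc_le (t := Real.sqrt 2 * v) (by positivity)
  rw [mul_pow, sq_s2] at h
  calc gfun v ≤ Real.exp (v ^ 2) * (Real.exp (-(2 * v ^ 2)) / (Real.sqrt Real.pi * (Real.sqrt 2 * v))) := by
        unfold gfun
        exact mul_le_mul_of_nonneg_left h (Real.exp_pos _).le
    _ = Real.exp (-v ^ 2) / (Real.sqrt Real.pi * Real.sqrt 2 * v) := by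
        rw [mul_div_assoc', exp_sq_mul_gauss, mul_assoc]

lemma gfun_ge {v : ℝ} (hv : 0 < v) :
    2 * Real.sqrt 2 / Real.sqrt Real.pi * (v * Real.exp (-v ^ 2) / (4 * v ^ 2 + 1)) ≤ gfun v := by
  have h := erfc_ge (t := Real.sqrt 2 * v) (by positivity)
  rw [mul_pow, sq_s2] at h
  have h2 := mul_le_mul_of_nonneg_left h (Real.exp_pos (v ^ 2)).le
  calc 2 * Real.sqrt 2 / Real.sqrt Real.pi * (v * Real.exp (-v ^ 2) / (4 * v ^ 2 + 1))
      = Real.exp (v ^ 2) * (2 / Real.sqrt Real.pi * (Real.sqrt 2 * v * Real.exp (-(2 * v ^ 2)) / (2 * (2 * v ^ 2) + 1))) := by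
        rw [show Real.exp (v ^ 2) * (2 / Real.sqrt Real.pi * (Real.sqrt 2 * v * Real.exp (-(2 * v ^ 2)) / (2 * (2 * v ^ 2) + 1)))
            = 2 * Real.sqrt 2 / Real.sqrt Real.pi * (v * (Real.exp (v ^ 2) * Real.exp (-(2 * v ^ 2))) / (2 * (2 * v ^ 2) + 1)) by ring,
          exp_sq_mul_gauss]
        ring
    _ ≤ gfun v := h2

lemma integrableOn_gfun (u : ℝ) : IntegrableOn gfun (Set.Ioi u) := by
  have h1 : IntegrableOn gfun (Set.Ioi (max u 1)) := by
    apply Integrable.mono' integrable_gauss.integrableOn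
      continuous_gfun.aestronglyMeasurable.restrict
    filter_upwards [ae_restrict_mem measurableSet_Ioi] with v hv
    have hv1 : (1:ℝ) < v := lt_of_le_of_lt (le_max_right u 1) hv
    rw [Real.norm_eq_abs, abs_of_nonneg (gfun_nonneg v)]
    have h := gfun_le (v := v) (by linarith)
    have hd : (1:ℝ) ≤ Real.sqrt Real.pi * Real.sqrt 2 * v := by
      have h1 := one_le_sqrtpi; have h2 := one_le_s2
      have hp : (1:ℝ) ≤ Real.sqrt Real.pi * Real.sqrt 2 := by nlinarith
      nlinarith [mul_nonneg (sub_nonneg.mpr hp) (sub_nonneg.mpr hv1.le)]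
    calc gfun v ≤ Real.exp (-v ^ 2) / (Real.sqrt Real.pi * Real.sqrt 2 * v) := h
      _ ≤ Real.exp (-v ^ 2) := by
        apply div_le_self (Real.exp_pos _).le hd
  have h2 : IntegrableOn gfun (Set.Ioc u (max u 1)) :=
    (continuous_gfun.integrableOn_Icc).mono_set Set.Ioc_subset_Icc_self
  have := h2.union h1
  rwa [Set.Ioc_union_Ioi_eq_Ioi (le_max_left u 1)] at this

lemma Ffun_nonneg (u : ℝ) : 0 ≤ Ffun u :=
  setIntegral_nonneg measurableSet_Ioi fun v _ => gfun_nonneg v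

lemma Ffun_le {u : ℝ} (hu : 1 ≤ u) :
    Ffun u ≤ 1 / (Real.sqrt Real.pi * Real.sqrt 2) * (Real.exp (-u ^ 2) / (2 * u ^ 2)) := by
  have hu0 : (0:ℝ) < u := by linarith
  obtain ⟨hint3, hval3⟩ := int_aux3 hu0
  have hmono : Ffun u ≤ ∫ v in Set.Ioi u,
      1 / (Real.sqrt Real.pi * Real.sqrt 2) * (Real.exp (-v ^ 2) * (1 / v + 1 / v ^ 3)) := by
    apply setIntegral_mono_on (integrableOn_gfun u)
      (hint3.const_mul _) measurableSet_Ioi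
    intro v hv
    have hv0 : (0:ℝ) < v := lt_trans hu0 hv
    calc gfun v ≤ Real.exp (-v ^ 2) / (Real.sqrt Real.pi * Real.sqrt 2 * v) := gfun_le hv0
      _ = 1 / (Real.sqrt Real.pi * Real.sqrt 2) * (Real.exp (-v ^ 2) * (1 / v)) := by
          field_simp
      _ ≤ 1 / (Real.sqrt Real.pi * Real.sqrt 2) * (Real.exp (-v ^ 2) * (1 / v + 1 / v ^ 3)) := by
          have h3 : (0:ℝ) ≤ 1 / v ^ 3 := by positivity
          gcongr
          linarith
  rw [MeasureTheory.integral_const_mul, hval3] at hmono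
  exact hmono

lemma Ffun_ge {u : ℝ} (hu : 1 ≤ u) :
    2 * Real.sqrt 2 / Real.sqrt Real.pi * (u ^ 4 / ((4 * u ^ 2 + 1) * (u ^ 2 + 1)))
        * (Real.exp (-u ^ 2) / (2 * u ^ 2)) ≤ Ffun u := by
  have hu0 : (0:ℝ) < u := by linarith
  obtain ⟨hint3, hval3⟩ := int_aux3 hu0
  set c : ℝ := 2 * Real.sqrt 2 / Real.sqrt Real.pi * (u ^ 4 / ((4 * u ^ 2 + 1) * (u ^ 2 + 1))) with hc
  have hmono : (∫ v in Set.Ioi u, c * (Real.exp (-v ^ 2) * (1 / v + 1 / v ^ 3))) ≤ Ffun u := by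
    apply setIntegral_mono_on (hint3.const_mul _) (integrableOn_gfun u) measurableSet_Ioi
    intro v hv
    have hv0 : (0:ℝ) < v := lt_trans hu0 hv
    have huv : u ≤ v := (le_of_lt hv)
    have key : c * (Real.exp (-v ^ 2) * (1 / v + 1 / v ^ 3))
        ≤ 2 * Real.sqrt 2 / Real.sqrt Real.pi * (v * Real.exp (-v ^ 2) / (4 * v ^ 2 + 1)) := by
      rw [hc]
      have he := (Real.exp_pos (-v ^ 2)).le
      have hs : (0:ℝ) ≤ 2 * Real.sqrt 2 / Real.sqrt Real.pi := by positivity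
      have hineq : u ^ 4 / ((4 * u ^ 2 + 1) * (u ^ 2 + 1)) * (1 / v + 1 / v ^ 3)
          ≤ v / (4 * v ^ 2 + 1) := by
        rw [div_mul_eq_mul_div, div_le_div_iff₀ (by positivity) (by positivity)]
        have expand : u ^ 4 * (1 / v + 1 / v ^ 3) * (4 * v ^ 2 + 1)
            = u ^ 4 * (v ^ 2 + 1) * (4 * v ^ 2 + 1) / v ^ 3 := by
          field_simp
        rw [expand, div_le_iff₀ (by positivity)]
        have h2 : u ^ 2 ≤ v ^ 2 := by nlinarith
        nlinarith [mul_nonneg (mul_nonneg (sq_nonneg u) (sq_nonneg v)) (sub_nonneg.mpr h2),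
          mul_nonneg (sub_nonneg.mpr h2) (by positivity : (0:ℝ) ≤ u ^ 2 + v ^ 2)]
      calc 2 * Real.sqrt 2 / Real.sqrt Real.pi * (u ^ 4 / ((4 * u ^ 2 + 1) * (u ^ 2 + 1)))
            * (Real.exp (-v ^ 2) * (1 / v + 1 / v ^ 3))
          = 2 * Real.sqrt 2 / Real.sqrt Real.pi
            * (u ^ 4 / ((4 * u ^ 2 + 1) * (u ^ 2 + 1)) * (1 / v + 1 / v ^ 3)) * Real.exp (-v ^ 2) := by
            ring
        _ ≤ 2 * Real.sqrt 2 / Real.sqrt Real.pi * (v / (4 * v ^ 2 + 1)) * Real.exp (-v ^ 2) := by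
            apply mul_le_mul_of_nonneg_right _ he
            exact mul_le_mul_of_nonneg_left hineq hs
        _ = 2 * Real.sqrt 2 / Real.sqrt Real.pi * (v * Real.exp (-v ^ 2) / (4 * v ^ 2 + 1)) := by
            ring
    exact le_trans key (gfun_ge hv0)
  rw [MeasureTheory.integral_const_mul, hval3] at hmono
  exact hmono

set_option maxHeartbeats 1000000 in
lemma lim_atTop :
    Tendsto (fun u : ℝ => Real.sqrt (8 * Real.pi) * u ^ 2 * Real.exp (u ^ 2) * Ffun u)
      atTop (nhds 1) := by
  have hinv : Tendsto (fun u : ℝ => 1 / u ^ 2) atTop (nhds 0) := by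
    simpa [one_div, Pi.inv_def] using (tendsto_pow_atTop (two_ne_zero)).inv_tendsto_atTop
  have hlow : Tendsto (fun u : ℝ => 4 / ((4 + 1 / u ^ 2) * (1 + 1 / u ^ 2))) atTop (nhds 1) := by
    have hd : Tendsto (fun u : ℝ => (4 + 1 / u ^ 2) * (1 + 1 / u ^ 2)) atTop (nhds 4) := by
      have h4 : Tendsto (fun u : ℝ => 4 + 1 / u ^ 2) atTop (nhds (4 + 0)) :=
        tendsto_const_nhds.add hinv
      have h1 : Tendsto (fun u : ℝ => 1 + 1 / u ^ 2) atTop (nhds (1 + 0)) :=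
        tendsto_const_nhds.add hinv
      have := h4.mul h1
      simpa using this
    have h4 : Tendsto (fun _ : ℝ => (4:ℝ)) atTop (nhds 4) := tendsto_const_nhds
    have := h4.div hd (by norm_num : (4:ℝ) ≠ 0)
    simpa [Pi.div_def] using this
  apply tendsto_of_tendsto_of_tendsto_of_le_of_le' hlow tendsto_const_nhds
  · filter_upwards [eventually_ge_atTop (1:ℝ)] with u hu
    have hu0 : (0:ℝ) < u := by linarith
    have h := Ffun_ge hu
    have hmul := mul_le_mul_of_nonneg_left h
      (by positivity : (0:ℝ) ≤ Real.sqrt (8 * Real.pi) * u ^ 2 * Real.exp (u ^ 2))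
    calc 4 / ((4 + 1 / u ^ 2) * (1 + 1 / u ^ 2))
        = Real.sqrt (8 * Real.pi) * u ^ 2 * Real.exp (u ^ 2)
          * (2 * Real.sqrt 2 / Real.sqrt Real.pi * (u ^ 4 / ((4 * u ^ 2 + 1) * (u ^ 2 + 1)))
            * (Real.exp (-u ^ 2) / (2 * u ^ 2))) := by
          rw [sqrt8pi, Real.exp_neg]
          have h1 : Real.exp (u ^ 2) ≠ 0 := (Real.exp_pos _).ne'
          have h2 : Real.sqrt Real.pi ≠ 0 := sqrtpi_pos.ne'
          have h3 : Real.sqrt 2 ≠ 0 := s2_pos.ne'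
          have h4 : u ≠ 0 := hu0.ne'
          field_simp
          ring_nf
          rw [sq_s2]
          ring
      _ ≤ Real.sqrt (8 * Real.pi) * u ^ 2 * Real.exp (u ^ 2) * Ffun u := hmul
  · filter_upwards [eventually_ge_atTop (1:ℝ)] with u hu
    have hu0 : (0:ℝ) < u := by linarith
    have h := Ffun_le hu
    have hmul := mul_le_mul_of_nonneg_left h
      (by positivity : (0:ℝ) ≤ Real.sqrt (8 * Real.pi) * u ^ 2 * Real.exp (u ^ 2))
    calc Real.sqrt (8 * Real.pi) * u ^ 2 * Real.exp (u ^ 2) * Ffun u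
        ≤ Real.sqrt (8 * Real.pi) * u ^ 2 * Real.exp (u ^ 2)
          * (1 / (Real.sqrt Real.pi * Real.sqrt 2) * (Real.exp (-u ^ 2) / (2 * u ^ 2))) := hmul
      _ = 1 := by
          rw [sqrt8pi, Real.exp_neg]
          have h1 : Real.exp (u ^ 2) ≠ 0 := (Real.exp_pos _).ne'
          have h2 : Real.sqrt Real.pi ≠ 0 := sqrtpi_pos.ne'
          have h3 : Real.sqrt 2 ≠ 0 := s2_pos.ne'
          have h4 : u ≠ 0 := hu0.ne'
          field_simp

noncomputable def hfun (v : ℝ) : ℝ := Real.exp (v ^ 2) * erfc (-(Real.sqrt 2 * v))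
noncomputable def Gfun (w : ℝ) : ℝ := ∫ v in (0:ℝ)..w, Real.exp (v ^ 2)
noncomputable def Hfun (w : ℝ) : ℝ := ∫ v in (-w)..(0:ℝ), hfun v

lemma continuous_expsq : Continuous (fun v : ℝ => Real.exp (v ^ 2)) :=
  Real.continuous_exp.comp (continuous_pow 2)

lemma continuous_hfun : Continuous hfun :=
  continuous_expsq.mul (continuous_erfc.comp (continuous_const.mul continuous_id).neg)

lemma hfun_nonneg (v : ℝ) : 0 ≤ hfun v := mul_nonneg (Real.exp_pos _).le (erfc_nonneg _)

lemma gfun_eq (v : ℝ) : gfun v = 2 * Real.exp (v ^ 2) - hfun v := by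
  unfold gfun hfun
  have h := erfc_add_neg (Real.sqrt 2 * v)
  have : erfc (Real.sqrt 2 * v) = 2 - erfc (-(Real.sqrt 2 * v)) := by linarith
  rw [this]; ring

lemma hasDerivAt_expsq (v : ℝ) :
    HasDerivAt (fun v : ℝ => Real.exp (v ^ 2)) (2 * v * Real.exp (v ^ 2)) v := by
  have h1 : HasDerivAt (fun v : ℝ => v ^ 2) (2 * v) v := by simpa using hasDerivAt_pow 2 v
  have h2 := (Real.hasDerivAt_exp (v ^ 2)).comp v h1
  refine h2.congr_deriv ?_
  ring

lemma int_aux5 {w : ℝ} (hw : 1 ≤ w) :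
    ∫ v in (1:ℝ)..w, Real.exp (v ^ 2) * (1 - 1 / (2 * v ^ 2))
      = Real.exp (w ^ 2) / (2 * w) - Real.exp 1 / 2 := by
  have huIcc : Set.uIcc (1:ℝ) w = Set.Icc 1 w := Set.uIcc_of_le hw
  have hderiv : ∀ v ∈ Set.uIcc (1:ℝ) w, HasDerivAt (fun v : ℝ => Real.exp (v ^ 2) / (2 * v))
      (Real.exp (v ^ 2) * (1 - 1 / (2 * v ^ 2))) v := by
    intro v hv
    rw [huIcc] at hv
    have hv0 : (0:ℝ) < v := lt_of_lt_of_le one_pos hv.1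
    have h := (hasDerivAt_expsq v).div ((hasDerivAt_id v).const_mul 2) (by positivity)
    refine h.congr_deriv ?_
    simp only [Pi.neg_apply, id]
    field_simp
  have hcont : ContinuousOn (fun v : ℝ => Real.exp (v ^ 2) * (1 - 1 / (2 * v ^ 2)))
      (Set.uIcc (1:ℝ) w) := by
    apply ContinuousOn.mul continuous_expsq.continuousOn
    apply ContinuousOn.sub continuousOn_const
    apply ContinuousOn.div continuousOn_const ((continuous_const.mul (continuous_pow 2)).continuousOn)
    intro v hv
    rw [huIcc] at hv
    have hv0 : (0:ℝ) < v := lt_of_lt_of_le one_pos hv.1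
    show 2 * v ^ 2 ≠ 0
    positivity
  rw [intervalIntegral.integral_eq_sub_of_hasDerivAt hderiv (hcont.intervalIntegrable)]
  norm_num

lemma intervalIntegrable_expsq (a b : ℝ) :
    IntervalIntegrable (fun v : ℝ => Real.exp (v ^ 2)) volume a b :=
  continuous_expsq.intervalIntegrable a b

lemma contOn_half (a b : ℝ) (ha : 0 < a) :
    ContinuousOn (fun v : ℝ => Real.exp (v ^ 2) * (1 / (2 * v ^ 2))) (Set.uIcc a b) → True := fun _ => trivial

lemma Gfun_nonneg_piece {a b : ℝ} (hab : a ≤ b) :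
    0 ≤ ∫ v in a..b, Real.exp (v ^ 2) :=
  intervalIntegral.integral_nonneg hab (fun v _ => (Real.exp_pos _).le)

lemma Gfun_split {w : ℝ} (hw : 1 ≤ w) :
    Gfun w = (∫ v in (0:ℝ)..(1:ℝ), Real.exp (v ^ 2)) + ∫ v in (1:ℝ)..w, Real.exp (v ^ 2) := by
  unfold Gfun
  rw [intervalIntegral.integral_add_adjacent_intervals (intervalIntegrable_expsq 0 1)
    (intervalIntegrable_expsq 1 w)]

lemma Gfun_lower {w : ℝ} (hw : 1 ≤ w) :
    Real.exp (w ^ 2) / (2 * w) - Real.exp 1 / 2 ≤ Gfun w := by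
  rw [Gfun_split hw, ← int_aux5 hw]
  have h1 : 0 ≤ ∫ v in (0:ℝ)..(1:ℝ), Real.exp (v ^ 2) := Gfun_nonneg_piece zero_le_one
  have h2 : (∫ v in (1:ℝ)..w, Real.exp (v ^ 2) * (1 - 1 / (2 * v ^ 2)))
      ≤ ∫ v in (1:ℝ)..w, Real.exp (v ^ 2) := by
    apply intervalIntegral.integral_mono_on hw
    · -- integrability of lhs
      apply ContinuousOn.intervalIntegrable
      apply ContinuousOn.mul continuous_expsq.continuousOn
      apply ContinuousOn.sub continuousOn_const
      apply ContinuousOn.div continuousOn_const ((continuous_const.mul (continuous_pow 2)).continuousOn)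
      intro v hv
      rw [Set.uIcc_of_le hw] at hv
      have : (0:ℝ) < v := lt_of_lt_of_le one_pos hv.1
      show 2 * v ^ 2 ≠ 0
      positivity
    · exact intervalIntegrable_expsq 1 w
    · intro v hv
      have hv0 : (0:ℝ) < v := lt_of_lt_of_le one_pos hv.1
      have : 0 ≤ 1 / (2 * v ^ 2) := by positivity
      nlinarith [Real.exp_pos (v ^ 2)]
  linarith

lemma Gfun_upper {w : ℝ} (hw : 2 ≤ w) :
    (1 - 2 / w ^ 2) * Gfun w
      ≤ Real.exp (w ^ 2) / (2 * w) + Real.exp 1 + w / 2 * Real.exp (w ^ 2 / 4) := by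
  have hw0 : (0:ℝ) < w := by linarith
  have hw1 : (1:ℝ) ≤ w := by linarith
  have hw2 : (1:ℝ) ≤ w / 2 := by linarith
  -- continuity of the correction term on positive intervals
  have hcont2 : ∀ a b : ℝ, 0 < a → ContinuousOn
      (fun v : ℝ => Real.exp (v ^ 2) * (1 / (2 * v ^ 2))) (Set.uIcc a b) → True := fun _ _ _ _ => trivial
  have contOn : ∀ s : Set ℝ, (∀ v ∈ s, v ≠ 0) → ContinuousOn
      (fun v : ℝ => Real.exp (v ^ 2) * (1 / (2 * v ^ 2))) s := by
    intro s hs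
    apply ContinuousOn.mul continuous_expsq.continuousOn
    apply ContinuousOn.div continuousOn_const ((continuous_const.mul (continuous_pow 2)).continuousOn)
    intro v hv
    have := hs v hv
    show 2 * v ^ 2 ≠ 0
    positivity
  -- ∫_1^w exp(v²) = int_aux5 value + R
  have hsplitfun : ∀ v ∈ Set.uIcc (1:ℝ) w, Real.exp (v ^ 2)
      = Real.exp (v ^ 2) * (1 - 1 / (2 * v ^ 2)) + Real.exp (v ^ 2) * (1 / (2 * v ^ 2)) := by
    intro v _; ring
  have hint1 : IntervalIntegrable (fun v : ℝ => Real.exp (v ^ 2) * (1 - 1 / (2 * v ^ 2))) volume 1 w := by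
    apply ContinuousOn.intervalIntegrable
    apply ContinuousOn.mul continuous_expsq.continuousOn
    apply ContinuousOn.sub continuousOn_const
    apply ContinuousOn.div continuousOn_const ((continuous_const.mul (continuous_pow 2)).continuousOn)
    intro v hv
    rw [Set.uIcc_of_le hw1] at hv
    have : (0:ℝ) < v := lt_of_lt_of_le one_pos hv.1
    show 2 * v ^ 2 ≠ 0
    positivity
  have hint2 : IntervalIntegrable (fun v : ℝ => Real.exp (v ^ 2) * (1 / (2 * v ^ 2))) volume 1 w := by
    apply ContinuousOn.intervalIntegrable
    apply contOn
    intro v hv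
    rw [Set.uIcc_of_le hw1] at hv
    exact (lt_of_lt_of_le one_pos hv.1).ne'
  have heq : (∫ v in (1:ℝ)..w, Real.exp (v ^ 2))
      = (Real.exp (w ^ 2) / (2 * w) - Real.exp 1 / 2)
        + ∫ v in (1:ℝ)..w, Real.exp (v ^ 2) * (1 / (2 * v ^ 2)) := by
    rw [← int_aux5 hw1, ← intervalIntegral.integral_add hint1 hint2]
    apply intervalIntegral.integral_congr
    intro v hv
    exact hsplitfun v hv
  -- R = R1 + R2
  have hint2a : IntervalIntegrable (fun v : ℝ => Real.exp (v ^ 2) * (1 / (2 * v ^ 2))) volume 1 (w/2) := by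
    apply ContinuousOn.intervalIntegrable
    apply contOn
    intro v hv
    rw [Set.uIcc_of_le hw2] at hv
    exact (lt_of_lt_of_le one_pos hv.1).ne'
  have hint2b : IntervalIntegrable (fun v : ℝ => Real.exp (v ^ 2) * (1 / (2 * v ^ 2))) volume (w/2) w := by
    apply ContinuousOn.intervalIntegrable
    apply contOn
    intro v hv
    rw [Set.uIcc_of_le (by linarith : w / 2 ≤ w)] at hv
    have : (0:ℝ) < v := lt_of_lt_of_le (by linarith) hv.1
    exact this.ne'
  have hsplitR : (∫ v in (1:ℝ)..w, Real.exp (v ^ 2) * (1 / (2 * v ^ 2)))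
      = (∫ v in (1:ℝ)..(w/2), Real.exp (v ^ 2) * (1 / (2 * v ^ 2)))
        + ∫ v in (w/2)..w, Real.exp (v ^ 2) * (1 / (2 * v ^ 2)) := by
    rw [intervalIntegral.integral_add_adjacent_intervals hint2a hint2b]
  -- bound R1
  have hR1 : (∫ v in (1:ℝ)..(w/2), Real.exp (v ^ 2) * (1 / (2 * v ^ 2)))
      ≤ w / 2 * Real.exp (w ^ 2 / 4) := by
    have hstep : (∫ v in (1:ℝ)..(w/2), Real.exp (v ^ 2) * (1 / (2 * v ^ 2)))
        ≤ ∫ v in (1:ℝ)..(w/2), Real.exp (w ^ 2 / 4) := by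
      apply intervalIntegral.integral_mono_on hw2 hint2a (intervalIntegrable_const)
      intro v hv
      have hv1 : (1:ℝ) ≤ v := hv.1
      have hv2 : v ≤ w / 2 := hv.2
      have h1 : Real.exp (v ^ 2) ≤ Real.exp (w ^ 2 / 4) := by
        apply Real.exp_le_exp.mpr
        nlinarith
      have h2 : 1 / (2 * v ^ 2) ≤ 1 := by
        rw [div_le_one (by positivity)]
        nlinarith
      nlinarith [Real.exp_pos (v ^ 2), Real.exp_pos (w ^ 2 / 4)]
    rw [intervalIntegral.integral_const] at hstep
    calc (∫ v in (1:ℝ)..(w/2), Real.exp (v ^ 2) * (1 / (2 * v ^ 2)))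
        ≤ (w / 2 - 1) * Real.exp (w ^ 2 / 4) := by simpa using hstep
      _ ≤ w / 2 * Real.exp (w ^ 2 / 4) := by
          nlinarith [Real.exp_pos (w ^ 2 / 4)]
  -- bound R2
  have hR2 : (∫ v in (w/2)..w, Real.exp (v ^ 2) * (1 / (2 * v ^ 2)))
      ≤ 2 / w ^ 2 * Gfun w := by
    have hstep : (∫ v in (w/2)..w, Real.exp (v ^ 2) * (1 / (2 * v ^ 2)))
        ≤ ∫ v in (w/2)..w, 2 / w ^ 2 * Real.exp (v ^ 2) := by
      apply intervalIntegral.integral_mono_on (by linarith) hint2b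
        ((intervalIntegrable_expsq _ _).const_mul _)
      intro v hv
      have hv1 : w / 2 ≤ v := hv.1
      have hv0 : (0:ℝ) < v := lt_of_lt_of_le (by linarith) hv1
      rw [mul_comm (2 / w ^ 2)]
      apply mul_le_mul_of_nonneg_left _ (Real.exp_pos _).le
      rw [div_le_div_iff₀ (by positivity) (by positivity)]
      nlinarith
    rw [intervalIntegral.integral_const_mul] at hstep
    have hGsplit : (∫ v in (w/2)..w, Real.exp (v ^ 2)) ≤ Gfun w := by
      have : Gfun w = (∫ v in (0:ℝ)..(w/2), Real.exp (v ^ 2)) + ∫ v in (w/2)..w, Real.exp (v ^ 2) := by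
        unfold Gfun
        rw [intervalIntegral.integral_add_adjacent_intervals (intervalIntegrable_expsq 0 (w/2))
          (intervalIntegrable_expsq (w/2) w)]
      have h0 : 0 ≤ ∫ v in (0:ℝ)..(w/2), Real.exp (v ^ 2) := Gfun_nonneg_piece (by linarith)
      linarith
    calc (∫ v in (w/2)..w, Real.exp (v ^ 2) * (1 / (2 * v ^ 2)))
        ≤ 2 / w ^ 2 * ∫ v in (w/2)..w, Real.exp (v ^ 2) := hstep
      _ ≤ 2 / w ^ 2 * Gfun w := by
          apply mul_le_mul_of_nonneg_left hGsplit (by positivity)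
  -- ∫_0^1 ≤ e
  have h01 : (∫ v in (0:ℝ)..(1:ℝ), Real.exp (v ^ 2)) ≤ Real.exp 1 := by
    have hstep : (∫ v in (0:ℝ)..(1:ℝ), Real.exp (v ^ 2)) ≤ ∫ v in (0:ℝ)..(1:ℝ), Real.exp 1 := by
      apply intervalIntegral.integral_mono_on zero_le_one (intervalIntegrable_expsq 0 1)
        intervalIntegrable_const
      intro v hv
      apply Real.exp_le_exp.mpr
      nlinarith [hv.1, hv.2]
    simpa using hstep
  have := Gfun_split hw1
  nlinarith [Real.exp_pos 1]

lemma Hfun_nonneg {w : ℝ} (hw : 0 ≤ w) : 0 ≤ Hfun w :=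
  intervalIntegral.integral_nonneg (by linarith) (fun v _ => hfun_nonneg v)

lemma hfun_le_gauss {v : ℝ} (hv : v ≤ -1) : hfun v ≤ Real.exp (-v ^ 2) := by
  have hv0 : (0:ℝ) < -v := by linarith
  have h := erfc_le (t := Real.sqrt 2 * (-v)) (by positivity)
  rw [mul_pow, sq_s2] at h
  have h2 : erfc (-(Real.sqrt 2 * v)) ≤ Real.exp (-(2 * v ^ 2)) / (Real.sqrt Real.pi * (Real.sqrt 2 * (-v))) := by
    rw [show -(Real.sqrt 2 * v) = Real.sqrt 2 * (-v) by ring]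
    convert h using 3
    ring
  have hd : (1:ℝ) ≤ Real.sqrt Real.pi * (Real.sqrt 2 * (-v)) := by
    have h1 := one_le_sqrtpi; have h2 := one_le_s2
    have hp : (1:ℝ) ≤ Real.sqrt Real.pi * Real.sqrt 2 := by nlinarith
    nlinarith [mul_nonneg (sub_nonneg.mpr hp) (sub_nonneg.mpr (by linarith : (1:ℝ) ≤ -v))]
  calc hfun v ≤ Real.exp (v ^ 2) * (Real.exp (-(2 * v ^ 2)) / (Real.sqrt Real.pi * (Real.sqrt 2 * (-v)))) := by
        unfold hfun
        exact mul_le_mul_of_nonneg_left h2 (Real.exp_pos _).le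
    _ = Real.exp (-v ^ 2) / (Real.sqrt Real.pi * (Real.sqrt 2 * (-v))) := by
        rw [mul_div_assoc', exp_sq_mul_gauss]
    _ ≤ Real.exp (-v ^ 2) := div_le_self (Real.exp_pos _).le hd

lemma Hfun_le {w : ℝ} (hw : 1 ≤ w) : Hfun w ≤ Real.sqrt Real.pi + 2 * Real.exp 1 := by
  have hsplit : Hfun w = (∫ v in (-w)..(-1:ℝ), hfun v) + ∫ v in (-1:ℝ)..(0:ℝ), hfun v := by
    unfold Hfun
    rw [intervalIntegral.integral_add_adjacent_intervals
      (continuous_hfun.intervalIntegrable _ _) (continuous_hfun.intervalIntegrable _ _)]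
  have h1 : (∫ v in (-w)..(-1:ℝ), hfun v) ≤ Real.sqrt Real.pi := by
    have hstep : (∫ v in (-w)..(-1:ℝ), hfun v) ≤ ∫ v in (-w)..(-1:ℝ), Real.exp (-v ^ 2) := by
      apply intervalIntegral.integral_mono_on (by linarith)
        (continuous_hfun.intervalIntegrable _ _) integrable_gauss.intervalIntegrable
      intro v hv
      exact hfun_le_gauss hv.2
    have hstep2 : (∫ v in (-w)..(-1:ℝ), Real.exp (-v ^ 2)) ≤ ∫ s : ℝ, Real.exp (-s ^ 2) := by
      rw [intervalIntegral.integral_of_le (by linarith : -w ≤ -1)]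
      apply setIntegral_le_integral integrable_gauss
      filter_upwards with s using (Real.exp_pos _).le
    rw [gauss_total] at hstep2
    linarith
  have h2 : (∫ v in (-1:ℝ)..(0:ℝ), hfun v) ≤ 2 * Real.exp 1 := by
    have hstep : (∫ v in (-1:ℝ)..(0:ℝ), hfun v) ≤ ∫ v in (-1:ℝ)..(0:ℝ), 2 * Real.exp 1 := by
      apply intervalIntegral.integral_mono_on (by linarith)
        (continuous_hfun.intervalIntegrable _ _) intervalIntegrable_const
      intro v hv
      have he : Real.exp (v ^ 2) ≤ Real.exp 1 := by
        apply Real.exp_le_exp.mpr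
        nlinarith [hv.1, hv.2]
      calc hfun v ≤ Real.exp (v ^ 2) * 2 :=
            mul_le_mul_of_nonneg_left (erfc_le_two _) (Real.exp_pos _).le
        _ ≤ 2 * Real.exp 1 := by nlinarith
    simpa using hstep
  linarith

lemma Ffun_neg_eq {w : ℝ} (hw : 0 ≤ w) :
    Ffun (-w) = 2 * Gfun w - Hfun w + Ffun 0 := by
  have hle : (-w : ℝ) ≤ 0 := by linarith
  have hsplit : Ffun (-w) = (∫ v in Set.Ioc (-w) 0, gfun v) + Ffun 0 := by
    unfold Ffun
    rw [← Set.Ioc_union_Ioi_eq_Ioi hle,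
      setIntegral_union (Set.Ioc_disjoint_Ioi le_rfl) measurableSet_Ioi
        ((continuous_gfun.integrableOn_Icc).mono_set Set.Ioc_subset_Icc_self)
        (integrableOn_gfun 0)]
  have hioc : (∫ v in Set.Ioc (-w) 0, gfun v) = ∫ v in (-w)..(0:ℝ), gfun v :=
    (intervalIntegral.integral_of_le hle).symm
  have hgsub : (∫ v in (-w)..(0:ℝ), gfun v)
      = 2 * (∫ v in (-w)..(0:ℝ), Real.exp (v ^ 2)) - Hfun w := by
    unfold Hfun
    rw [intervalIntegral.integral_congr (fun v _ => gfun_eq v),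
      intervalIntegral.integral_sub (f := fun v => 2 * Real.exp (v ^ 2))
        ((continuous_const.mul continuous_expsq).intervalIntegrable _ _)
        (continuous_hfun.intervalIntegrable _ _),
      intervalIntegral.integral_const_mul]
  have hrefl : (∫ v in (-w)..(0:ℝ), Real.exp (v ^ 2)) = Gfun w := by
    have h := intervalIntegral.integral_comp_neg (a := (0:ℝ)) (b := w)
      (fun v => Real.exp (v ^ 2))
    unfold Gfun
    rw [neg_zero] at h
    rw [← h]
    apply intervalIntegral.integral_congr
    intro v _
    simp [neg_sq]
  rw [hsplit, hioc, hgsub, hrefl]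

lemma tendsto_mul_exp_neg_sq :
    Tendsto (fun w : ℝ => w * Real.exp (-w ^ 2)) atTop (nhds 0) := by
  apply tendsto_of_tendsto_of_tendsto_of_le_of_le' tendsto_const_nhds
    (Real.tendsto_pow_mul_exp_neg_atTop_nhds_zero 1)
  · filter_upwards [eventually_ge_atTop (0:ℝ)] with w hw
    positivity
  · filter_upwards [eventually_ge_atTop (1:ℝ)] with w hw
    have : Real.exp (-w ^ 2) ≤ Real.exp (-w) := by
      apply Real.exp_le_exp.mpr
      nlinarith
    calc w * Real.exp (-w ^ 2) ≤ w * Real.exp (-w) := by nlinarith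
      _ = w ^ 1 * Real.exp (-w) := by ring

lemma tendsto_sq_mul_exp_neg_34 :
    Tendsto (fun w : ℝ => w ^ 2 * Real.exp (-(3 * w ^ 2 / 4))) atTop (nhds 0) := by
  apply tendsto_of_tendsto_of_tendsto_of_le_of_le' tendsto_const_nhds
    (Real.tendsto_pow_mul_exp_neg_atTop_nhds_zero 2)
  · filter_upwards [eventually_ge_atTop (0:ℝ)] with w hw
    positivity
  · filter_upwards [eventually_ge_atTop (2:ℝ)] with w hw
    have : Real.exp (-(3 * w ^ 2 / 4)) ≤ Real.exp (-w) := by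
      apply Real.exp_le_exp.mpr
      nlinarith
    nlinarith [sq_nonneg w, Real.exp_pos (-(3 * w ^ 2 / 4)), Real.exp_pos (-w)]


set_option maxHeartbeats 1000000 in
lemma lim_w : Tendsto (fun w : ℝ => w * Real.exp (-w ^ 2) * Ffun (-w)) atTop (nhds 1) := by
  set C2 : ℝ := Real.sqrt Real.pi + 2 * Real.exp 1 with hC2
  have t1 := tendsto_mul_exp_neg_sq
  have t2 := tendsto_sq_mul_exp_neg_34
  have tinv : Tendsto (fun w : ℝ => 2 / w ^ 2) atTop (nhds 0) := by
    have h : Tendsto (fun w : ℝ => (w ^ 2)⁻¹) atTop (nhds 0) :=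
      (tendsto_pow_atTop two_ne_zero).inv_tendsto_atTop
    have h2 := h.const_mul (2:ℝ)
    simpa [div_eq_mul_inv] using h2
  have tlow : Tendsto (fun w : ℝ => 1 - (Real.exp 1 + C2) * (w * Real.exp (-w ^ 2)))
      atTop (nhds 1) := by
    have hc : Tendsto (fun _ : ℝ => (1:ℝ)) atTop (nhds 1) := tendsto_const_nhds
    have h2 := hc.sub (t1.const_mul (Real.exp 1 + C2))
    simpa using h2
  have tup : Tendsto (fun w : ℝ =>
      (1 + 2 * Real.exp 1 * (w * Real.exp (-w ^ 2)) + w ^ 2 * Real.exp (-(3 * w ^ 2 / 4)))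
        / (1 - 2 / w ^ 2) + Ffun 0 * (w * Real.exp (-w ^ 2))) atTop (nhds 1) := by
    have hnum : Tendsto (fun w : ℝ => 1 + 2 * Real.exp 1 * (w * Real.exp (-w ^ 2))
        + w ^ 2 * Real.exp (-(3 * w ^ 2 / 4))) atTop (nhds (1 + 2 * Real.exp 1 * 0 + 0)) :=
      (tendsto_const_nhds.add (t1.const_mul _)).add t2
    have hden : Tendsto (fun w : ℝ => 1 - 2 / w ^ 2) atTop (nhds (1 - 0)) :=
      tendsto_const_nhds.sub tinv
    have hdiv := hnum.div hden (by norm_num)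
    have h3 := hdiv.add (t1.const_mul (Ffun 0))
    simpa using h3
  apply tendsto_of_tendsto_of_tendsto_of_le_of_le' tlow tup
  · filter_upwards [eventually_ge_atTop (2:ℝ)] with w hw
    have hw1 : (1:ℝ) ≤ w := by linarith
    have hw0 : (0:ℝ) < w := by linarith
    have hwE : (0:ℝ) ≤ w * Real.exp (-w ^ 2) := by positivity
    have hG := Gfun_lower hw1
    have hH := Hfun_le hw1
    have hF0 := Ffun_nonneg 0
    have hEP : Real.exp (-w ^ 2) * Real.exp (w ^ 2) = 1 := by
      rw [← Real.exp_add]; simp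
    have key : w * Real.exp (-w ^ 2) * (2 * (Real.exp (w ^ 2) / (2 * w))) = 1 := by
      have h : w * Real.exp (-w ^ 2) * (2 * (Real.exp (w ^ 2) / (2 * w)))
          = (w / w) * (Real.exp (-w ^ 2) * Real.exp (w ^ 2)) := by ring
      rw [h, div_self hw0.ne', one_mul, hEP]
    have h5 : w * Real.exp (-w ^ 2)
        * (2 * (Real.exp (w ^ 2) / (2 * w) - Real.exp 1 / 2) - C2)
        = 1 - (Real.exp 1 + C2) * (w * Real.exp (-w ^ 2)) := by
      have h : w * Real.exp (-w ^ 2)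
          * (2 * (Real.exp (w ^ 2) / (2 * w) - Real.exp 1 / 2) - C2)
          = w * Real.exp (-w ^ 2) * (2 * (Real.exp (w ^ 2) / (2 * w)))
            - (Real.exp 1 + C2) * (w * Real.exp (-w ^ 2)) := by ring
      rw [h, key]
    rw [Ffun_neg_eq (by linarith : (0:ℝ) ≤ w)]
    calc 1 - (Real.exp 1 + C2) * (w * Real.exp (-w ^ 2))
        = w * Real.exp (-w ^ 2)
          * (2 * (Real.exp (w ^ 2) / (2 * w) - Real.exp 1 / 2) - C2) := h5.symm
      _ ≤ w * Real.exp (-w ^ 2) * (2 * Gfun w - Hfun w + Ffun 0) := by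
          apply mul_le_mul_of_nonneg_left _ hwE
          linarith
  · filter_upwards [eventually_ge_atTop (2:ℝ)] with w hw
    have hw1 : (1:ℝ) ≤ w := by linarith
    have hw0 : (0:ℝ) < w := by linarith
    have hwE : (0:ℝ) ≤ w * Real.exp (-w ^ 2) := by positivity
    have hG := Gfun_upper hw
    have hH := Hfun_nonneg (by linarith : (0:ℝ) ≤ w)
    have hEP : Real.exp (-w ^ 2) * Real.exp (w ^ 2) = 1 := by
      rw [← Real.exp_add]; simp
    have hEQ : Real.exp (-w ^ 2) * Real.exp (w ^ 2 / 4) = Real.exp (-(3 * w ^ 2 / 4)) := by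
      rw [← Real.exp_add]; congr 1; ring
    have hden : (0:ℝ) < 1 - 2 / w ^ 2 := by
      have : 2 / w ^ 2 ≤ 1 / 2 := by
        rw [div_le_div_iff₀ (by positivity) (by norm_num)]
        nlinarith
      linarith
    have hGb : Gfun w ≤ (Real.exp (w ^ 2) / (2 * w) + Real.exp 1 + w / 2 * Real.exp (w ^ 2 / 4))
        / (1 - 2 / w ^ 2) := by
      rw [le_div_iff₀ hden, mul_comm]
      exact hG
    have key2 : w * Real.exp (-w ^ 2)
        * (2 * (Real.exp (w ^ 2) / (2 * w) + Real.exp 1 + w / 2 * Real.exp (w ^ 2 / 4)))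
        = 1 + 2 * Real.exp 1 * (w * Real.exp (-w ^ 2))
          + w ^ 2 * Real.exp (-(3 * w ^ 2 / 4)) := by
      have h : w * Real.exp (-w ^ 2)
          * (2 * (Real.exp (w ^ 2) / (2 * w) + Real.exp 1 + w / 2 * Real.exp (w ^ 2 / 4)))
          = (w / w) * (Real.exp (-w ^ 2) * Real.exp (w ^ 2))
            + 2 * Real.exp 1 * (w * Real.exp (-w ^ 2))
            + w ^ 2 * (Real.exp (-w ^ 2) * Real.exp (w ^ 2 / 4)) := by ring
      rw [h, div_self hw0.ne', one_mul, hEP, hEQ]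
    rw [Ffun_neg_eq (by linarith : (0:ℝ) ≤ w)]
    calc w * Real.exp (-w ^ 2) * (2 * Gfun w - Hfun w + Ffun 0)
        ≤ w * Real.exp (-w ^ 2)
          * (2 * ((Real.exp (w ^ 2) / (2 * w) + Real.exp 1 + w / 2 * Real.exp (w ^ 2 / 4))
              / (1 - 2 / w ^ 2)) + Ffun 0) := by
          apply mul_le_mul_of_nonneg_left _ hwE
          have h2G : 2 * Gfun w ≤ 2 * ((Real.exp (w ^ 2) / (2 * w) + Real.exp 1
              + w / 2 * Real.exp (w ^ 2 / 4)) / (1 - 2 / w ^ 2)) := by linarith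
          linarith
      _ = (w * Real.exp (-w ^ 2)
            * (2 * (Real.exp (w ^ 2) / (2 * w) + Real.exp 1 + w / 2 * Real.exp (w ^ 2 / 4))))
            / (1 - 2 / w ^ 2) + Ffun 0 * (w * Real.exp (-w ^ 2)) := by ring
      _ = (1 + 2 * Real.exp 1 * (w * Real.exp (-w ^ 2))
            + w ^ 2 * Real.exp (-(3 * w ^ 2 / 4))) / (1 - 2 / w ^ 2)
            + Ffun 0 * (w * Real.exp (-w ^ 2)) := by rw [key2]

lemma lim_atBot : Tendsto (fun u : ℝ => -u * Real.exp (-u ^ 2) * Ffun u) atBot (nhds 1) := by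
  have h := lim_w.comp tendsto_neg_atBot_atTop
  apply h.congr
  intro u
  simp [Function.comp, neg_sq]

set_option maxHeartbeats 1000000 in
/-- Tail asymptotics of the class AII† edge limit:
`D(y) ~ e^{−y²}/(√(8π) y²)` as `y → +∞` and `D(y) ~ −1/(√2 y)` as `y → −∞`. -/
theorem statement12 :
    Tendsto (fun y : ℝ => Real.sqrt (8 * Real.pi) * y ^ 2 * Real.exp (y ^ 2) * edgeAII y)
        atTop (nhds 1) ∧
      Tendsto (fun y : ℝ => (-(Real.sqrt 2) * y) * edgeAII y) atBot (nhds 1) := by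
  have hedge : ∀ y : ℝ, edgeAII y = 1 / 2 * Real.exp (-y ^ 2 / 2) * Ffun (y / Real.sqrt 2) :=
    fun y => rfl
  have hu : ∀ y : ℝ, (y / Real.sqrt 2) ^ 2 = y ^ 2 / 2 := by
    intro y; rw [div_pow, sq_s2]
  constructor
  · have hdiv : Tendsto (fun y : ℝ => y / Real.sqrt 2) atTop atTop :=
      tendsto_id.atTop_div_const s2_pos
    have h := lim_atTop.comp hdiv
    apply h.congr
    intro y
    simp only [Function.comp]
    rw [hedge y, hu y]
    have hE : Real.exp (y ^ 2) * Real.exp (-y ^ 2 / 2) = Real.exp (y ^ 2 / 2) := by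
      rw [← Real.exp_add]; congr 1; ring
    calc Real.sqrt (8 * Real.pi) * (y ^ 2 / 2) * Real.exp (y ^ 2 / 2) * Ffun (y / Real.sqrt 2)
        = Real.sqrt (8 * Real.pi) * (y ^ 2 / 2) * (Real.exp (y ^ 2) * Real.exp (-y ^ 2 / 2))
          * Ffun (y / Real.sqrt 2) := by rw [hE]
      _ = Real.sqrt (8 * Real.pi) * y ^ 2 * Real.exp (y ^ 2)
          * (1 / 2 * Real.exp (-y ^ 2 / 2) * Ffun (y / Real.sqrt 2)) := by ring
  · have hdiv : Tendsto (fun y : ℝ => y / Real.sqrt 2) atBot atBot := by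
      apply tendsto_id.atBot_div_const s2_pos
    have h := lim_atBot.comp hdiv
    apply h.congr
    intro y
    simp only [Function.comp]
    rw [hedge y]
    have hE : Real.exp (-(y / Real.sqrt 2) ^ 2) = Real.exp (-y ^ 2 / 2) := by
      rw [hu y]; congr 1; ring
    have hs2 : Real.sqrt 2 * Real.sqrt 2 = 2 := by
      have := sq_s2; nlinarith
    calc -(y / Real.sqrt 2) * Real.exp (-(y / Real.sqrt 2) ^ 2) * Ffun (y / Real.sqrt 2)
        = -(y / Real.sqrt 2) * Real.exp (-y ^ 2 / 2) * Ffun (y / Real.sqrt 2) := by rw [hE]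
      _ = -(Real.sqrt 2) * y * (1 / 2 * Real.exp (-y ^ 2 / 2) * Ffun (y / Real.sqrt 2)) := by
          rw [div_eq_mul_inv]
          have hinv : (Real.sqrt 2)⁻¹ = Real.sqrt 2 / 2 := by
            rw [eq_div_iff (by norm_num : (2:ℝ) ≠ 0), inv_mul_eq_div, div_eq_iff s2_pos.ne']
            linarith [hs2]
          rw [hinv]
          ring
end

section
/- Asymptotics of the analytically continued Owen T-function: lim_{v→+∞} v² · e^{v²} · ∫_0^{1/√2} e^{−2v²(1−u²)}/(1−u²) du = 1/√2. (Equivalently, −i√π·T(2v, i/√2) = (1/(2√π)) ∫_0^{1/√2} e^{−2v²(1−u²)}/(1−u²) du behaves like e^{−v²}/(√(8π) v²) as v → ∞.) -/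
open Filter MeasureTheory intervalIntegral

private lemma aux_ftc (v a₁ a₂ : ℝ) :
    ∫ u in a₁..a₂, 4 * v ^ 2 * u * Real.exp (-(v ^ 2 * (1 - 2 * u ^ 2))) =
      Real.exp (-(v ^ 2 * (1 - 2 * a₂ ^ 2))) - Real.exp (-(v ^ 2 * (1 - 2 * a₁ ^ 2))) := by
  have hderiv : ∀ u : ℝ, HasDerivAt (fun u => Real.exp (-(v ^ 2 * (1 - 2 * u ^ 2))))
      (4 * v ^ 2 * u * Real.exp (-(v ^ 2 * (1 - 2 * u ^ 2)))) u := by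
    intro u
    have h1 : HasDerivAt (fun u : ℝ => -(v ^ 2 * (1 - 2 * u ^ 2))) (4 * v ^ 2 * u) u := by
      have h0 := ((hasDerivAt_pow 2 u).const_mul (2 * v ^ 2)).sub_const (v ^ 2)
      have heq : (fun x : ℝ => 2 * v ^ 2 * x ^ 2 - v ^ 2)
          = fun x : ℝ => -(v ^ 2 * (1 - 2 * x ^ 2)) := by funext x; ring
      rw [heq] at h0
      refine h0.congr_deriv ?_
      push_cast; ring
    have h2 := h1.exp
    convert h2 using 1
    ring
  exact intervalIntegral.integral_eq_sub_of_hasDerivAt (fun u _ => hderiv u)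
    ((by continuity : Continuous fun u : ℝ =>
      4 * v ^ 2 * u * Real.exp (-(v ^ 2 * (1 - 2 * u ^ 2)))).intervalIntegrable _ _)

private lemma aux_decay (c : ℝ) (hc : 0 < c) :
    Tendsto (fun v : ℝ => v ^ 2 * Real.exp (-(c * v ^ 2))) atTop (nhds 0) := by
  have h1 : Tendsto (fun v : ℝ => c * v ^ 2) atTop atTop :=
    (tendsto_pow_atTop (by norm_num : 2 ≠ 0)).const_mul_atTop hc
  have h2 : Tendsto (fun x : ℝ => c⁻¹ * (x ^ 1 * Real.exp (-x))) atTop (nhds (c⁻¹ * 0)) :=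
    (Real.tendsto_pow_mul_exp_neg_atTop_nhds_zero 1).const_mul _
  have h3 := h2.comp h1
  simp only [mul_zero] at h3
  refine h3.congr fun v => ?_
  simp only [Function.comp_apply, pow_one]
  field_simp

set_option maxHeartbeats 2000000 in
/-- Asymptotics of the analytically continued Owen T-function:
`v² e^{v²} ∫_0^{1/√2} e^{−2v²(1−u²)}/(1−u²) du → 1/√2` as `v → +∞`. -/
theorem statement14 :
    Tendsto (fun v : ℝ =>
        v ^ 2 * Real.exp (v ^ 2) *
          ∫ u in (0 : ℝ)..(1 / Real.sqrt 2),
            Real.exp (-(2 * v ^ 2 * (1 - u ^ 2))) / (1 - u ^ 2))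
      atTop (nhds (1 / Real.sqrt 2)) := by
  have hs2 : (0:ℝ) < Real.sqrt 2 := Real.sqrt_pos.mpr (by norm_num)
  set b : ℝ := 1 / Real.sqrt 2 with hbdef
  have hb : 0 < b := by positivity
  have hb2 : b ^ 2 = 1 / 2 := by
    rw [hbdef, div_pow, one_pow, Real.sq_sqrt (by norm_num : (0:ℝ) ≤ 2)]
  have hb1 : b < 1 := by nlinarith
  -- value of rho at b
  have hρb : (4 * b * (1 - b ^ 2))⁻¹ = b := by
    have h4 : 4 * b * (1 - b ^ 2) = 2 * b := by rw [hb2]; ring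
    rw [h4]
    exact inv_eq_of_mul_eq_one_right (by nlinarith)
  have hcontρ : ContinuousAt (fun u : ℝ => (4 * u * (1 - u ^ 2))⁻¹) b := by
    apply ContinuousAt.inv₀
    · exact Continuous.continuousAt (by fun_prop)
    · have h4 : 4 * b * (1 - b ^ 2) = 2 * b := by rw [hb2]; ring
      rw [h4]; positivity
  -- rewrite the function as a single integral
  have hfeq : ∀ v : ℝ, v ^ 2 * Real.exp (v ^ 2) *
      (∫ u in (0:ℝ)..b, Real.exp (-(2 * v ^ 2 * (1 - u ^ 2))) / (1 - u ^ 2))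
      = ∫ u in (0:ℝ)..b, v ^ 2 * Real.exp (-(v ^ 2 * (1 - 2 * u ^ 2))) / (1 - u ^ 2) := by
    intro v
    rw [← intervalIntegral.integral_const_mul]
    refine intervalIntegral.integral_congr fun u _ => ?_
    rw [mul_div_assoc', mul_assoc, ← Real.exp_add]
    have harg : v ^ 2 + -(2 * v ^ 2 * (1 - u ^ 2)) = -(v ^ 2 * (1 - 2 * u ^ 2)) := by ring
    rw [harg]
  rw [Metric.tendsto_nhds]
  intro ε hε
  obtain ⟨δ, hδpos, hδ⟩ := Metric.continuousAt_iff.mp hcontρ (ε/3) (by positivity)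
  set a : ℝ := max (b - δ/2) (b/2) with hadef
  have hab : a < b := max_lt (by linarith) (by linarith)
  have ha0 : 0 < a := lt_of_lt_of_le (by linarith) (le_max_right _ _)
  have ha2 : a ^ 2 < 1/2 := by nlinarith
  set c : ℝ := 1 - 2 * a ^ 2 with hcdef
  have hc : 0 < c := by simp only [hcdef]; linarith
  -- rho is close to b on [a, b]
  have hρ : ∀ u ∈ Set.Icc a b, |(4 * u * (1 - u ^ 2))⁻¹ - b| < ε/3 := by
    intro u hu
    have h1 : b - δ/2 ≤ a := le_max_left _ _
    have h2 : dist u b < δ := by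
      rw [Real.dist_eq]
      refine lt_of_le_of_lt (abs_le.mpr ⟨by linarith [hu.1], by linarith [hu.2]⟩)
        (by linarith : δ/2 < δ)
    have := hδ h2
    rwa [Real.dist_eq, hρb] at this
  -- integrability of the integrand on subintervals of [0, b]
  have hconti : ∀ (v lo hi : ℝ), lo ≤ hi → 0 ≤ lo → hi ≤ b →
      IntervalIntegrable
        (fun u => v ^ 2 * Real.exp (-(v ^ 2 * (1 - 2 * u ^ 2))) / (1 - u ^ 2))
        MeasureTheory.volume lo hi := by
    intro v lo hi h1 h2 h3
    apply ContinuousOn.intervalIntegrable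
    have hnum : Continuous fun u : ℝ => v ^ 2 * Real.exp (-(v ^ 2 * (1 - 2 * u ^ 2))) := by
      fun_prop
    have hden : Continuous fun u : ℝ => 1 - u ^ 2 := by fun_prop
    apply ContinuousOn.div hnum.continuousOn hden.continuousOn
    refine fun u hu => ?_
    rw [Set.uIcc_of_le h1] at hu
    have hu0 : 0 ≤ u := le_trans h2 hu.1
    have hub : u ≤ b := le_trans hu.2 h3
    have h5 : u ^ 2 ≤ 1/2 := by nlinarith
    have h6 : (0:ℝ) < 1 - u ^ 2 := by linarith
    exact h6.ne'
  -- pointwise bounds on [a, b]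
  have hpt : ∀ v : ℝ, ∀ u ∈ Set.Icc a b,
      (b - ε/3) * (4 * v ^ 2 * u * Real.exp (-(v ^ 2 * (1 - 2 * u ^ 2)))) ≤
        v ^ 2 * Real.exp (-(v ^ 2 * (1 - 2 * u ^ 2))) / (1 - u ^ 2) ∧
      v ^ 2 * Real.exp (-(v ^ 2 * (1 - 2 * u ^ 2))) / (1 - u ^ 2) ≤
        (b + ε/3) * (4 * v ^ 2 * u * Real.exp (-(v ^ 2 * (1 - 2 * u ^ 2)))) := by
    intro v u hu
    have hu0 : 0 < u := lt_of_lt_of_le ha0 hu.1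
    have hub : u ≤ b := hu.2
    have hu1 : u ^ 2 ≤ 1/2 := by nlinarith
    have hden : (0:ℝ) < 1 - u ^ 2 := by linarith
    have hGnn : 0 ≤ 4 * v ^ 2 * u * Real.exp (-(v ^ 2 * (1 - 2 * u ^ 2))) := by positivity
    have hkey : v ^ 2 * Real.exp (-(v ^ 2 * (1 - 2 * u ^ 2))) / (1 - u ^ 2)
        = (4 * v ^ 2 * u * Real.exp (-(v ^ 2 * (1 - 2 * u ^ 2)))) * (4 * u * (1 - u ^ 2))⁻¹ := by
      have h4u : (4:ℝ) * u * (1 - u ^ 2) ≠ 0 := by positivity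
      field_simp
    obtain ⟨hl, hr⟩ := abs_lt.mp (hρ u hu)
    constructor
    · rw [hkey, mul_comm ((b - ε/3)) _]
      exact mul_le_mul_of_nonneg_left (by linarith) hGnn
    · rw [hkey, mul_comm ((b + ε/3)) _]
      exact mul_le_mul_of_nonneg_left (by linarith) hGnn
  -- exact value of the comparison integral
  have hGint : ∀ v : ℝ,
      (∫ u in a..b, 4 * v ^ 2 * u * Real.exp (-(v ^ 2 * (1 - 2 * u ^ 2))))
        = 1 - Real.exp (-(v ^ 2 * c)) := by
    intro v
    rw [aux_ftc]
    have h1 : 1 - 2 * b ^ 2 = 0 := by rw [hb2]; ring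
    rw [h1]
    simp [hcdef]
  have hGcont : ∀ v : ℝ, Continuous
      (fun u : ℝ => 4 * v ^ 2 * u * Real.exp (-(v ^ 2 * (1 - 2 * u ^ 2)))) := by
    intro v; fun_prop
  -- bounds on the integral over [a, b]
  have hB : ∀ v : ℝ,
      (b - ε/3) * (1 - Real.exp (-(v ^ 2 * c))) ≤
        (∫ u in a..b, v ^ 2 * Real.exp (-(v ^ 2 * (1 - 2 * u ^ 2))) / (1 - u ^ 2)) ∧
      (∫ u in a..b, v ^ 2 * Real.exp (-(v ^ 2 * (1 - 2 * u ^ 2))) / (1 - u ^ 2)) ≤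
        (b + ε/3) * (1 - Real.exp (-(v ^ 2 * c))) := by
    intro v
    constructor
    · calc (b - ε/3) * (1 - Real.exp (-(v ^ 2 * c)))
          = ∫ u in a..b, (b - ε/3) * (4 * v ^ 2 * u * Real.exp (-(v ^ 2 * (1 - 2 * u ^ 2)))) := by
            rw [intervalIntegral.integral_const_mul, hGint]
        _ ≤ _ := by
            apply intervalIntegral.integral_mono_on hab.le
              ((continuous_const.mul (hGcont v)).intervalIntegrable _ _)
              (hconti v a b hab.le ha0.le le_rfl)
            exact fun u hu => (hpt v u hu).1
    · calc (∫ u in a..b, v ^ 2 * Real.exp (-(v ^ 2 * (1 - 2 * u ^ 2))) / (1 - u ^ 2))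
          ≤ ∫ u in a..b, (b + ε/3) * (4 * v ^ 2 * u * Real.exp (-(v ^ 2 * (1 - 2 * u ^ 2)))) := by
            apply intervalIntegral.integral_mono_on hab.le
              (hconti v a b hab.le ha0.le le_rfl)
              ((continuous_const.mul (hGcont v)).intervalIntegrable _ _)
            exact fun u hu => (hpt v u hu).2
        _ = (b + ε/3) * (1 - Real.exp (-(v ^ 2 * c))) := by
            rw [intervalIntegral.integral_const_mul, hGint]
  -- bound on the integral over [0, a]
  have hA : ∀ v : ℝ,
      |∫ u in (0:ℝ)..a, v ^ 2 * Real.exp (-(v ^ 2 * (1 - 2 * u ^ 2))) / (1 - u ^ 2)| ≤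
        2 * a * (v ^ 2 * Real.exp (-(c * v ^ 2))) := by
    intro v
    have hbound := intervalIntegral.norm_integral_le_of_norm_le_const
      (a := (0:ℝ)) (b := a) (C := 2 * (v ^ 2 * Real.exp (-(c * v ^ 2))))
      (f := fun u => v ^ 2 * Real.exp (-(v ^ 2 * (1 - 2 * u ^ 2))) / (1 - u ^ 2)) ?_
    · rw [Real.norm_eq_abs] at hbound
      calc |∫ u in (0:ℝ)..a, v ^ 2 * Real.exp (-(v ^ 2 * (1 - 2 * u ^ 2))) / (1 - u ^ 2)|
          ≤ 2 * (v ^ 2 * Real.exp (-(c * v ^ 2))) * |a - 0| := hbound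
        _ = 2 * a * (v ^ 2 * Real.exp (-(c * v ^ 2))) := by
            rw [sub_zero, abs_of_nonneg ha0.le]; ring
    · intro u hu
      rw [Set.uIoc_of_le ha0.le] at hu
      have hu0 : 0 < u := hu.1
      have hua : u ≤ a := hu.2
      have huA : u ^ 2 ≤ a ^ 2 := by nlinarith
      have hden : (1:ℝ)/2 ≤ 1 - u ^ 2 := by linarith
      have hnum0 : 0 ≤ v ^ 2 * Real.exp (-(v ^ 2 * (1 - 2 * u ^ 2))) := by positivity
      rw [Real.norm_eq_abs, abs_of_nonneg (div_nonneg hnum0 (by linarith))]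
      have hexp : Real.exp (-(v ^ 2 * (1 - 2 * u ^ 2))) ≤ Real.exp (-(c * v ^ 2)) :=
        Real.exp_le_exp.mpr (by nlinarith [sq_nonneg v])
      calc v ^ 2 * Real.exp (-(v ^ 2 * (1 - 2 * u ^ 2))) / (1 - u ^ 2)
          ≤ v ^ 2 * Real.exp (-(c * v ^ 2)) / (1/2) := by
            apply div_le_div₀ (by positivity) _ (by norm_num) hden
            exact mul_le_mul_of_nonneg_left hexp (sq_nonneg v)
        _ = 2 * (v ^ 2 * Real.exp (-(c * v ^ 2))) := by ring
  -- limits of the error terms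
  have hA0 : Tendsto (fun v : ℝ => 2 * a * (v ^ 2 * Real.exp (-(c * v ^ 2)))) atTop (nhds 0) := by
    have := (aux_decay c hc).const_mul (2 * a)
    simpa using this
  have hE0 : Tendsto (fun v : ℝ => Real.exp (-(v ^ 2 * c))) atTop (nhds 0) := by
    apply Real.tendsto_exp_atBot.comp
    rw [tendsto_neg_atBot_iff]
    exact (tendsto_pow_atTop (by norm_num : 2 ≠ 0)).atTop_mul_const hc
  filter_upwards [hA0.eventually (gt_mem_nhds (by positivity : (0:ℝ) < ε/3)),
    hE0.eventually (gt_mem_nhds (by positivity : (0:ℝ) < ε/3))] with v hAv hEv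
  rw [Real.dist_eq, hfeq v,
    ← intervalIntegral.integral_add_adjacent_intervals
      (hconti v 0 a ha0.le le_rfl (le_of_lt hab))
      (hconti v a b hab.le ha0.le le_rfl)]
  set A := ∫ u in (0:ℝ)..a, v ^ 2 * Real.exp (-(v ^ 2 * (1 - 2 * u ^ 2))) / (1 - u ^ 2) with hAdef
  set B := ∫ u in a..b, v ^ 2 * Real.exp (-(v ^ 2 * (1 - 2 * u ^ 2))) / (1 - u ^ 2) with hBdef
  have hAle : |A| < ε/3 := lt_of_le_of_lt (hA v) hAv
  obtain ⟨hB1, hB2⟩ := hB v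
  set E := Real.exp (-(v ^ 2 * c)) with hEdef
  have hEpos : 0 < E := Real.exp_pos _
  have hE1 : E ≤ 1 := Real.exp_le_one_iff.mpr (by nlinarith [sq_nonneg v])
  have habs := abs_lt.mp hAle
  rw [abs_lt]
  constructor
  · -- b - (A + B) < ε : use B ≥ (b - ε/3)(1 - E)
    have h1 : (b - ε/3) * (1 - E) ≥ b - ε/3 - E := by nlinarith
    nlinarith
  · have h2 : (b + ε/3) * (1 - E) ≤ b + ε/3 := by nlinarith
    nlinarith
end

section
/- Bulk limit for class AI†: fix ρ with 0 ≤ ρ < 1, y ∈ ℝ and c ∈ ℂ, and set x_N := N·ρ + √(2N)·y + c. Then lim_{N→∞} e^{−x_N} · [E_N(x_N) − (x_N/(N+1)) · E_{N−1}(x_N)] = 1 − ρ. -/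
open Filter Finset

/-- The truncated exponential `E_n(x) = ∑_{j=0}^n x^j/j!`. -/
noncomputable def truncExp (n : ℕ) (x : ℂ) : ℂ :=
  ∑ j ∈ Finset.range (n + 1), x ^ j / (Nat.factorial j : ℂ)

private lemma cexp_eq_tsum (x : ℂ) :
    Complex.exp x = ∑' n : ℕ, x ^ n / (Nat.factorial n : ℂ) := by
  rw [Complex.exp_eq_exp_ℂ, NormedSpace.exp_eq_tsum_div]

private lemma tail_bound (n : ℕ) (x : ℂ) {q : ℝ} (hq0 : 0 ≤ q) (hq1 : q < 1)
    (hx : ‖x‖ ≤ q * ((n : ℝ) + 2)) :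
    ‖Complex.exp x - truncExp n x‖
      ≤ ‖x‖ ^ (n + 1) / (Nat.factorial (n + 1) : ℝ) * (1 - q)⁻¹ := by
  have hsum : Summable fun j : ℕ => x ^ j / (Nat.factorial j : ℂ) :=
    NormedSpace.expSeries_div_summable x
  have h1 : Complex.exp x - truncExp n x
      = ∑' k : ℕ, x ^ (k + (n + 1)) / (Nat.factorial (k + (n + 1)) : ℂ) := by
    have h2 := Summable.sum_add_tsum_nat_add (f := fun j : ℕ => x ^ j / (Nat.factorial j : ℂ)) (n + 1) hsum
    rw [cexp_eq_tsum, truncExp, ← h2]; ring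
  rw [h1]
  have hgeom : HasSum (fun k : ℕ => (‖x‖ ^ (n + 1) / (Nat.factorial (n + 1) : ℝ)) * q ^ k)
      (‖x‖ ^ (n + 1) / (Nat.factorial (n + 1) : ℝ) * (1 - q)⁻¹) :=
    (hasSum_geometric_of_lt_one hq0 hq1).mul_left _
  refine tsum_of_norm_bounded hgeom fun k => ?_
  have hnorm : ‖x ^ (k + (n + 1)) / (Nat.factorial (k + (n + 1)) : ℂ)‖
      = ‖x‖ ^ (k + (n + 1)) / (Nat.factorial (k + (n + 1)) : ℝ) := by
    rw [norm_div, norm_pow]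
    norm_num
  rw [hnorm]
  have hfact : (Nat.factorial (n + 1) : ℝ) * ((n : ℝ) + 2) ^ k
      ≤ (Nat.factorial (k + (n + 1)) : ℝ) := by
    have h := Nat.factorial_mul_pow_le_factorial (m := n + 1) (n := k)
    have h' : (Nat.factorial (n + 1) * (n + 2) ^ k : ℕ) ≤ (Nat.factorial (k + (n + 1)) : ℕ) := by
      rwa [add_comm k (n + 1)]
    exact_mod_cast h'
  have hnum : ‖x‖ ^ (k + (n + 1)) ≤ ‖x‖ ^ (n + 1) * (q * ((n : ℝ) + 2)) ^ k := by
    rw [pow_add, mul_comm]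
    exact mul_le_mul_of_nonneg_left (pow_le_pow_left₀ (norm_nonneg x) hx k) (by positivity)
  have h2k : ((n : ℝ) + 2) ^ k ≠ 0 := by positivity
  calc ‖x‖ ^ (k + (n + 1)) / (Nat.factorial (k + (n + 1)) : ℝ)
      ≤ (‖x‖ ^ (n + 1) * (q * ((n : ℝ) + 2)) ^ k)
          / ((Nat.factorial (n + 1) : ℝ) * ((n : ℝ) + 2) ^ k) :=
        div_le_div₀ (by positivity) hnum (by positivity) hfact
    _ = ‖x‖ ^ (n + 1) / (Nat.factorial (n + 1) : ℝ) * q ^ k := by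
        rw [mul_pow]
        field_simp

private lemma sqrt_natCast_atTop : Tendsto (fun N : ℕ => Real.sqrt N) atTop atTop := by
  have h := (tendsto_rpow_atTop (y := (1 : ℝ)/2) (by norm_num)).comp
    (tendsto_natCast_atTop_atTop (R := ℝ))
  exact h.congr fun N => (Real.sqrt_eq_rpow _).symm

private lemma sqrt_div_tendsto : Tendsto (fun N : ℕ => Real.sqrt N / N) atTop (nhds 0) := by
  have h : Tendsto (fun N : ℕ => (Real.sqrt N)⁻¹) atTop (nhds 0) :=
    tendsto_inv_atTop_zero.comp sqrt_natCast_atTop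
  refine h.congr' ?_
  filter_upwards [eventually_ge_atTop 1] with N hN
  have h0 : (0 : ℝ) < Real.sqrt N := Real.sqrt_pos.2 (by exact_mod_cast hN)
  have hN0 : (0 : ℝ) < (N : ℝ) := by exact_mod_cast hN
  have hms : Real.sqrt N * Real.sqrt N = (N : ℝ) := Real.mul_self_sqrt (by positivity)
  field_simp
  rw [Real.sq_sqrt hN0.le]

private lemma exp_sqrt_geom (s q : ℝ) (hq0 : 0 < q) (hq1 : q < 1) :
    Tendsto (fun N : ℕ => Real.exp (s * Real.sqrt N) * q ^ N) atTop (nhds 0) := by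
  have hlog : Real.log q < 0 := Real.log_neg hq0 hq1
  have h1 : Tendsto (fun N : ℕ => Real.sqrt N * (s + Real.sqrt N * Real.log q)) atTop atBot := by
    apply Tendsto.atTop_mul_atBot₀ sqrt_natCast_atTop
    apply tendsto_atBot_add_const_left _ s
    exact sqrt_natCast_atTop.atTop_mul_const_of_neg hlog
  have h2 := Real.tendsto_exp_atBot.comp h1
  refine h2.congr fun N => ?_
  simp only [Function.comp_apply]
  rw [mul_add, ← mul_assoc, Real.mul_self_sqrt (Nat.cast_nonneg N), Real.exp_add,
    mul_comm (Real.sqrt N) s, Real.exp_nat_mul, Real.exp_log hq0]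

private lemma ratio_tendsto (ρ s b : ℝ) :
    Tendsto (fun N : ℕ => ρ + (s * (Real.sqrt N / N) + b * (1 / N))) atTop (nhds ρ) := by
  have h := (sqrt_div_tendsto.const_mul s).add (tendsto_one_div_atTop_nhds_zero_nat.const_mul b)
  simpa using (tendsto_const_nhds (x := ρ) (f := atTop)).add h

private lemma keyReal (ρ s b : ℝ) (hρ0 : 0 ≤ ρ) (hρ1 : ρ < 1) (hs : 0 ≤ s) (hb : 0 ≤ b) :
    Tendsto (fun N : ℕ =>
      Real.exp (-(ρ * N) + s * Real.sqrt N + b) * (ρ * N + s * Real.sqrt N + b) ^ N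
        / (Nat.factorial N : ℝ)) atTop (nhds 0) := by
  have hA1 : ρ * Real.exp (1 - ρ) < 1 := by
    rcases eq_or_lt_of_le hρ0 with h | h
    · rw [← h, zero_mul]; norm_num
    · have hlog := Real.log_lt_sub_one_of_pos h (ne_of_lt hρ1)
      calc ρ * Real.exp (1 - ρ) = Real.exp (Real.log ρ + (1 - ρ)) := by
            rw [Real.exp_add, Real.exp_log h]
        _ < Real.exp 0 := Real.exp_lt_exp.2 (by linarith)
        _ = 1 := Real.exp_zero
  have hA0 : 0 ≤ ρ * Real.exp (1 - ρ) := by positivity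
  set q : ℝ := (ρ * Real.exp (1 - ρ) + 1) / 2 with hqdef
  have hAq : ρ * Real.exp (1 - ρ) < q := by rw [hqdef]; linarith
  have hq1 : q < 1 := by rw [hqdef]; linarith
  have hq0 : 0 < q := by rw [hqdef]; linarith
  have hu : Tendsto (fun N : ℕ => Real.exp (1 - ρ) * (ρ + (s * (Real.sqrt N / N) + b * (1 / N))))
      atTop (nhds (ρ * Real.exp (1 - ρ))) := by
    simpa [mul_comm] using (ratio_tendsto ρ s b).const_mul (Real.exp (1 - ρ))
  have hev : ∀ᶠ N : ℕ in atTop,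
      Real.exp (1 - ρ) * (ρ + (s * (Real.sqrt N / N) + b * (1 / N))) ≤ q :=
    hu.eventually_le_const hAq
  apply squeeze_zero' (g := fun N : ℕ => Real.exp b * (Real.exp (s * Real.sqrt N) * q ^ N))
  · exact Eventually.of_forall fun N => by positivity
  · filter_upwards [hev, eventually_ge_atTop 1] with N hqN hN1
    have hNpos : (0 : ℝ) < N := by exact_mod_cast hN1
    set u : ℝ := ρ + (s * (Real.sqrt N / N) + b * (1 / N)) with hudef
    have hu0 : 0 ≤ u := by
      have := Real.sqrt_nonneg (N : ℝ)
      rw [hudef]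
      positivity
    have hvu : ρ * N + s * Real.sqrt N + b = u * N := by
      rw [hudef]; field_simp; ring
    have hNN : ((N : ℝ) ^ N / (Nat.factorial N : ℝ)) ≤ Real.exp N := by
      have h1 : ((N : ℝ) ^ N / (Nat.factorial N : ℝ))
          ≤ ∑ i ∈ range (N + 1), (N : ℝ) ^ i / (Nat.factorial i : ℝ) :=
        Finset.single_le_sum (f := fun i => (N : ℝ) ^ i / (Nat.factorial i : ℝ))
          (fun i _ => by positivity) (self_mem_range_succ N)
      exact h1.trans (Real.sum_le_exp_of_nonneg (Nat.cast_nonneg N) (N + 1))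
    have e1 : Real.exp (-(ρ * N) + s * Real.sqrt N + b) * Real.exp N
        = Real.exp b * Real.exp (s * Real.sqrt N) * Real.exp ((N : ℝ) * (1 - ρ)) := by
      rw [← Real.exp_add, ← Real.exp_add, ← Real.exp_add]; congr 1; ring
    have hbase : 0 ≤ Real.exp (1 - ρ) * u := mul_nonneg (Real.exp_nonneg _) hu0
    calc Real.exp (-(ρ * N) + s * Real.sqrt N + b) * (ρ * N + s * Real.sqrt N + b) ^ N
          / (Nat.factorial N : ℝ)
        = Real.exp (-(ρ * N) + s * Real.sqrt N + b)
            * (u ^ N * ((N : ℝ) ^ N / (Nat.factorial N : ℝ))) := by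
          rw [hvu, mul_pow]; ring
      _ ≤ Real.exp (-(ρ * N) + s * Real.sqrt N + b) * (u ^ N * Real.exp N) := by
          have := pow_nonneg hu0 N
          gcongr
      _ = (Real.exp (-(ρ * N) + s * Real.sqrt N + b) * Real.exp N) * u ^ N := by ring
      _ = (Real.exp b * Real.exp (s * Real.sqrt N) * Real.exp ((N : ℝ) * (1 - ρ))) * u ^ N := by
          rw [e1]
      _ = Real.exp b * (Real.exp (s * Real.sqrt N) * (Real.exp (1 - ρ) * u) ^ N) := by
          rw [mul_pow, ← Real.exp_nat_mul]; ring
      _ ≤ Real.exp b * (Real.exp (s * Real.sqrt N) * q ^ N) := by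
          gcongr
  · simpa using (exp_sqrt_geom s q hq0 hq1).const_mul (Real.exp b)

private noncomputable def xseq (ρ y : ℝ) (c : ℂ) (N : ℕ) : ℂ :=
  (N : ℂ) * (ρ : ℂ) + ((Real.sqrt (2 * N) : ℝ) : ℂ) * (y : ℂ) + c

/-- Bulk limit for class AI† (complex symmetric): with `x_N = Nρ + √(2N) y + c` and
`0 ≤ ρ < 1`, `e^{−x_N} [E_N(x_N) − (x_N/(N+1)) E_{N−1}(x_N)] → 1 − ρ`. -/
theorem statement15 (ρ : ℝ) (hρ0 : 0 ≤ ρ) (hρ1 : ρ < 1) (y : ℝ) (c : ℂ) :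
    Tendsto (fun N : ℕ =>
        Complex.exp (-((N : ℂ) * (ρ : ℂ) + (Real.sqrt (2 * N) : ℝ) * (y : ℂ) + c)) *
          (truncExp N ((N : ℂ) * (ρ : ℂ) + (Real.sqrt (2 * N) : ℝ) * (y : ℂ) + c) -
            (((N : ℂ) * (ρ : ℂ) + (Real.sqrt (2 * N) : ℝ) * (y : ℂ) + c) / ((N : ℂ) + 1)) *
              truncExp (N - 1) ((N : ℂ) * (ρ : ℂ) + (Real.sqrt (2 * N) : ℝ) * (y : ℂ) + c)))
      atTop (nhds (((1 - ρ : ℝ)) : ℂ)) := by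
  show Tendsto (fun N : ℕ =>
      Complex.exp (-(xseq ρ y c N)) *
        (truncExp N (xseq ρ y c N) -
          (xseq ρ y c N / ((N : ℂ) + 1)) * truncExp (N - 1) (xseq ρ y c N)))
    atTop (nhds (((1 - ρ : ℝ)) : ℂ))
  set s : ℝ := Real.sqrt 2 * |y| with hsdef
  have hs0 : 0 ≤ s := by positivity
  set b : ℝ := ‖c‖ with hbdef
  have hb0 : 0 ≤ b := norm_nonneg c
  have hsqrt2N : ∀ N : ℕ, Real.sqrt (2 * N) = Real.sqrt 2 * Real.sqrt N := fun N =>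
    Real.sqrt_mul (by norm_num) _
  have hre : ∀ N : ℕ, (xseq ρ y c N).re = ρ * N + Real.sqrt (2 * N) * y + c.re := by
    intro N
    simp [xseq, Complex.add_re, Complex.mul_re]
    ring
  have hsqnorm : ∀ N : ℕ, ‖((Real.sqrt (2 * N) : ℝ) : ℂ) * (y : ℂ)‖ = s * Real.sqrt N := by
    intro N
    rw [norm_mul, Complex.norm_real, Complex.norm_real, Real.norm_eq_abs, Real.norm_eq_abs,
      abs_of_nonneg (Real.sqrt_nonneg _), hsqrt2N, hsdef]
    ring
  have hxnorm : ∀ N : ℕ, ‖xseq ρ y c N‖ ≤ ρ * N + s * Real.sqrt N + b := by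
    intro N
    have h1 : ‖xseq ρ y c N‖
        ≤ ‖(N : ℂ) * (ρ : ℂ)‖ + ‖((Real.sqrt (2 * N) : ℝ) : ℂ) * (y : ℂ)‖ + ‖c‖ := by
      rw [xseq]; exact norm_add₃_le
    have h2 : ‖(N : ℂ) * (ρ : ℂ)‖ = ρ * N := by
      rw [norm_mul, Complex.norm_natCast, Complex.norm_real, Real.norm_eq_abs,
        abs_of_nonneg hρ0]; ring
    rw [← h2, ← hsqnorm N]
    exact h1
  have hv0 : ∀ N : ℕ, 0 ≤ ρ * N + s * Real.sqrt N + b := fun N =>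
    add_nonneg (add_nonneg (mul_nonneg hρ0 (Nat.cast_nonneg N))
      (mul_nonneg hs0 (Real.sqrt_nonneg _))) hb0
  have hexpnorm : ∀ N : ℕ,
      ‖Complex.exp (-(xseq ρ y c N))‖ ≤ Real.exp (-(ρ * N) + s * Real.sqrt N + b) := by
    intro N
    rw [Complex.norm_exp, Complex.neg_re, hre]
    apply Real.exp_le_exp.2
    have h1 : -(Real.sqrt (2 * N) * y) ≤ s * Real.sqrt N := by
      calc -(Real.sqrt (2 * N) * y) ≤ |Real.sqrt (2 * N) * y| := neg_le_abs _
        _ = Real.sqrt (2 * N) * |y| := by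
            rw [abs_mul, abs_of_nonneg (Real.sqrt_nonneg _)]
        _ = s * Real.sqrt N := by rw [hsqrt2N, hsdef]; ring
    have h2 : -c.re ≤ b := by
      have := Complex.abs_re_le_norm c
      have h3 : -c.re ≤ |c.re| := neg_le_abs _
      rw [hbdef]
      linarith
    linarith
  set q1 : ℝ := (1 + ρ) / 2 with hq1def
  have hρq1 : ρ < q1 := by rw [hq1def]; linarith
  have hq11 : q1 < 1 := by rw [hq1def]; linarith
  have hq10 : 0 ≤ q1 := by rw [hq1def]; linarith
  have hq1inv : 0 ≤ (1 - q1)⁻¹ := by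
    have : 0 < 1 - q1 := by linarith
    positivity
  have hvN : ∀ᶠ N : ℕ in atTop, 1 ≤ N ∧ ρ * N + s * Real.sqrt N + b ≤ q1 * N := by
    filter_upwards [eventually_ge_atTop 1, (ratio_tendsto ρ s b).eventually_le_const hρq1]
      with N h1 h2
    refine ⟨h1, ?_⟩
    have hNpos : (0 : ℝ) < N := by exact_mod_cast h1
    have h3 := mul_le_mul_of_nonneg_right h2 hNpos.le
    calc ρ * N + s * Real.sqrt N + b
        = (ρ + (s * (Real.sqrt N / N) + b * (1 / N))) * N := by field_simp; ring
      _ ≤ q1 * N := h3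
  have hgv : Tendsto (fun N : ℕ =>
      (Real.exp (-(ρ * N) + s * Real.sqrt N + b) * (ρ * N + s * Real.sqrt N + b) ^ N
        / (Nat.factorial N : ℝ)) * (1 - q1)⁻¹) atTop (nhds 0) := by
    simpa using (keyReal ρ s b hρ0 hρ1 hs0 hb0).mul_const (1 - q1)⁻¹
  -- P1
  have P1 : Tendsto (fun N : ℕ => Complex.exp (-(xseq ρ y c N)) * truncExp N (xseq ρ y c N))
      atTop (nhds 1) := by
    refine tendsto_iff_norm_sub_tendsto_zero.mpr ?_
    refine squeeze_zero' (Eventually.of_forall fun N => norm_nonneg _) ?_ hgv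
    filter_upwards [hvN] with N hN
    obtain ⟨hN1, hv⟩ := hN
    have hNpos : (0 : ℝ) < N := by exact_mod_cast hN1
    have hm := hxnorm N
    have cond1 : ‖xseq ρ y c N‖ ≤ q1 * ((N : ℝ) + 2) := by
      refine hm.trans (hv.trans ?_)
      have : (N : ℝ) ≤ (N : ℝ) + 2 := by linarith
      exact mul_le_mul_of_nonneg_left this hq10
    have hprod : Complex.exp (-(xseq ρ y c N)) * Complex.exp (xseq ρ y c N) = 1 := by
      rw [← Complex.exp_add]; simp
    have hdiff : Complex.exp (-(xseq ρ y c N)) * truncExp N (xseq ρ y c N) - 1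
        = -(Complex.exp (-(xseq ρ y c N))
            * (Complex.exp (xseq ρ y c N) - truncExp N (xseq ρ y c N))) := by
      linear_combination hprod
    rw [hdiff, norm_neg, norm_mul]
    have htail := tail_bound N (xseq ρ y c N) hq10 hq11 cond1
    have hfacpos : (0 : ℝ) < (Nat.factorial N : ℝ) := by positivity
    have hfacpos1 : (0 : ℝ) < (Nat.factorial (N + 1) : ℝ) := by positivity
    have hvN1 : ρ * N + s * Real.sqrt N + b ≤ (N : ℝ) + 1 := by
      refine hv.trans ?_
      have := mul_le_mul_of_nonneg_right hq11.le hNpos.le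
      linarith
    have key1 : ‖xseq ρ y c N‖ ^ (N + 1) / (Nat.factorial (N + 1) : ℝ)
        ≤ (ρ * N + s * Real.sqrt N + b) ^ N / (Nat.factorial N : ℝ) := by
      calc ‖xseq ρ y c N‖ ^ (N + 1) / (Nat.factorial (N + 1) : ℝ)
          ≤ (ρ * N + s * Real.sqrt N + b) ^ (N + 1) / (Nat.factorial (N + 1) : ℝ) := by
            gcongr
        _ = (ρ * N + s * Real.sqrt N + b) ^ N / (Nat.factorial N : ℝ)
            * ((ρ * N + s * Real.sqrt N + b) / ((N : ℝ) + 1)) := by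
            rw [pow_succ, Nat.factorial_succ, Nat.cast_mul, Nat.cast_add, Nat.cast_one,
              div_mul_div_comm, mul_comm ((N : ℝ) + 1) (Nat.factorial N : ℝ)]
        _ ≤ (ρ * N + s * Real.sqrt N + b) ^ N / (Nat.factorial N : ℝ) * 1 := by
            have h1 : 0 ≤ (ρ * N + s * Real.sqrt N + b) ^ N / (Nat.factorial N : ℝ) := by
              have := hv0 N
              positivity
            have h2 : (ρ * N + s * Real.sqrt N + b) / ((N : ℝ) + 1) ≤ 1 :=
              (div_le_one (by linarith)).2 hvN1
            exact mul_le_mul_of_nonneg_left h2 h1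
        _ = (ρ * N + s * Real.sqrt N + b) ^ N / (Nat.factorial N : ℝ) := mul_one _
    calc ‖Complex.exp (-(xseq ρ y c N))‖
          * ‖Complex.exp (xseq ρ y c N) - truncExp N (xseq ρ y c N)‖
        ≤ Real.exp (-(ρ * N) + s * Real.sqrt N + b)
            * (‖xseq ρ y c N‖ ^ (N + 1) / (Nat.factorial (N + 1) : ℝ) * (1 - q1)⁻¹) :=
          mul_le_mul (hexpnorm N) htail (norm_nonneg _) (Real.exp_nonneg _)
      _ ≤ Real.exp (-(ρ * N) + s * Real.sqrt N + b)
            * ((ρ * N + s * Real.sqrt N + b) ^ N / (Nat.factorial N : ℝ) * (1 - q1)⁻¹) := by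
          gcongr
      _ = (Real.exp (-(ρ * N) + s * Real.sqrt N + b) * (ρ * N + s * Real.sqrt N + b) ^ N
            / (Nat.factorial N : ℝ)) * (1 - q1)⁻¹ := by ring
  -- P3
  have P3 : Tendsto (fun N : ℕ => Complex.exp (-(xseq ρ y c N)) * truncExp (N - 1) (xseq ρ y c N))
      atTop (nhds 1) := by
    refine tendsto_iff_norm_sub_tendsto_zero.mpr ?_
    refine squeeze_zero' (Eventually.of_forall fun N => norm_nonneg _) ?_ hgv
    filter_upwards [hvN] with N hN
    obtain ⟨hN1, hv⟩ := hN
    have hNpos : (0 : ℝ) < N := by exact_mod_cast hN1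
    have hm := hxnorm N
    have hNn : (N - 1) + 1 = N := Nat.succ_pred_eq_of_pos hN1
    have hcast : ((N - 1 : ℕ) : ℝ) = (N : ℝ) - 1 := by
      rw [Nat.cast_sub hN1]; norm_num
    have cond3 : ‖xseq ρ y c N‖ ≤ q1 * (((N - 1 : ℕ) : ℝ) + 2) := by
      refine hm.trans (hv.trans ?_)
      rw [hcast]
      have : (N : ℝ) ≤ (N : ℝ) - 1 + 2 := by linarith
      exact mul_le_mul_of_nonneg_left this hq10
    have hprod : Complex.exp (-(xseq ρ y c N)) * Complex.exp (xseq ρ y c N) = 1 := by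
      rw [← Complex.exp_add]; simp
    have hdiff : Complex.exp (-(xseq ρ y c N)) * truncExp (N - 1) (xseq ρ y c N) - 1
        = -(Complex.exp (-(xseq ρ y c N))
            * (Complex.exp (xseq ρ y c N) - truncExp (N - 1) (xseq ρ y c N))) := by
      linear_combination hprod
    rw [hdiff, norm_neg, norm_mul]
    have htail := tail_bound (N - 1) (xseq ρ y c N) hq10 hq11 cond3
    rw [hNn] at htail
    have key2 : ‖xseq ρ y c N‖ ^ N / (Nat.factorial N : ℝ)
        ≤ (ρ * N + s * Real.sqrt N + b) ^ N / (Nat.factorial N : ℝ) := by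
      gcongr
    calc ‖Complex.exp (-(xseq ρ y c N))‖
          * ‖Complex.exp (xseq ρ y c N) - truncExp (N - 1) (xseq ρ y c N)‖
        ≤ Real.exp (-(ρ * N) + s * Real.sqrt N + b)
            * (‖xseq ρ y c N‖ ^ N / (Nat.factorial N : ℝ) * (1 - q1)⁻¹) :=
          mul_le_mul (hexpnorm N) htail (norm_nonneg _) (Real.exp_nonneg _)
      _ ≤ Real.exp (-(ρ * N) + s * Real.sqrt N + b)
            * ((ρ * N + s * Real.sqrt N + b) ^ N / (Nat.factorial N : ℝ) * (1 - q1)⁻¹) := by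
          gcongr
      _ = (Real.exp (-(ρ * N) + s * Real.sqrt N + b) * (ρ * N + s * Real.sqrt N + b) ^ N
            / (Nat.factorial N : ℝ)) * (1 - q1)⁻¹ := by ring
  -- P2
  have P2 : Tendsto (fun N : ℕ => xseq ρ y c N / ((N : ℂ) + 1)) atTop (nhds (ρ : ℂ)) := by
    refine tendsto_iff_norm_sub_tendsto_zero.mpr ?_
    refine squeeze_zero' (Eventually.of_forall fun N => norm_nonneg _) ?_
      (ratio_tendsto 0 s ‖c - (ρ : ℂ)‖)
    filter_upwards [eventually_ge_atTop 1] with N hN1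
    have hNpos : (0 : ℝ) < N := by exact_mod_cast hN1
    have hne : ((N : ℂ) + 1) ≠ 0 := by
      rw [show ((N : ℂ) + 1) = ((N + 1 : ℕ) : ℂ) from by push_cast; ring]
      exact_mod_cast Nat.succ_ne_zero N
    have hxd : xseq ρ y c N / ((N : ℂ) + 1) - (ρ : ℂ)
        = (((Real.sqrt (2 * N) : ℝ) : ℂ) * (y : ℂ) + (c - (ρ : ℂ))) / ((N : ℂ) + 1) := by
      rw [eq_div_iff hne, sub_mul, div_mul_cancel₀ _ hne]
      simp only [xseq]
      ring
    rw [hxd, norm_div]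
    have hden : ‖(N : ℂ) + 1‖ = (N : ℝ) + 1 := by
      rw [show ((N : ℂ) + 1) = ((N + 1 : ℕ) : ℂ) from by push_cast; ring, Complex.norm_natCast]
      push_cast; ring
    rw [hden]
    have hnum : ‖((Real.sqrt (2 * N) : ℝ) : ℂ) * (y : ℂ) + (c - (ρ : ℂ))‖
        ≤ s * Real.sqrt N + ‖c - (ρ : ℂ)‖ := by
      refine (norm_add_le _ _).trans ?_
      rw [hsqnorm N]
    have hnn : 0 ≤ s * Real.sqrt N + ‖c - (ρ : ℂ)‖ :=
      add_nonneg (mul_nonneg hs0 (Real.sqrt_nonneg _)) (norm_nonneg _)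
    calc ‖((Real.sqrt (2 * N) : ℝ) : ℂ) * (y : ℂ) + (c - (ρ : ℂ))‖ / ((N : ℝ) + 1)
        ≤ (s * Real.sqrt N + ‖c - (ρ : ℂ)‖) / ((N : ℝ) + 1) := by gcongr
      _ ≤ (s * Real.sqrt N + ‖c - (ρ : ℂ)‖) / (N : ℝ) := by
          gcongr
          linarith
      _ = 0 + (s * (Real.sqrt N / N) + ‖c - (ρ : ℂ)‖ * (1 / N)) := by ring
  -- assemble
  have hval : ((1 - ρ : ℝ) : ℂ) = 1 - (ρ : ℂ) * 1 := by push_cast; ring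
  rw [hval]
  exact (P1.sub (P2.mul P3)).congr fun N => by ring
end
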